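/- arXiv:2011.14730 — 4 statements merged into one kernel-verified Lean document; each statement's English description precedes it below -/
import Mathlib

section
/- Let G be a finite simple graph, t ∈ ℕ, χ³ a 3-stable coloring of V(G)³, and define the pair-coloring χ(v,w) := χ³(v,w,w). Then χ is 2-stable (in the directed sense) on the t-closure graph H of (G,χ). -/
open SimpleGraph

/-- The interior (set of internal vertices) of a walk: its support minus the two endpoints. -/
def walkInterior {V : Type*} {G : SimpleGraph V} {x y : V} (p : G.Walk x y) : Set V :=
  {z | z ∈ p.support ∧ z ≠ x ∧ z ≠ y}

/-- `H` is (isomorphic to) a topological subgraph of `G`: there is an injective map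
`φ : V(H) → V(G)` together with, for every edge `xy` of `H`, a path in `G` from `φ x`
to `φ y` of length at least 1, such that these paths are pairwise internally
vertex-disjoint and no internal vertex of any of them lies in the image of `φ`. -/
def IsTopSubgraph {W : Type*} {V : Type*} (H : SimpleGraph W) (G : SimpleGraph V) : Prop :=
  ∃ φ : W → V, Function.Injective φ ∧
    ∃ P : ∀ x y : W, H.Adj x y → G.Walk (φ x) (φ y),
      (∀ x y (hxy : H.Adj x y), (P x y hxy).IsPath ∧ 0 < (P x y hxy).length) ∧
      (∀ x y (hxy : H.Adj x y), P y x hxy.symm = (P x y hxy).reverse) ∧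
      (∀ x y (hxy : H.Adj x y), Disjoint (walkInterior (P x y hxy)) (Set.range φ)) ∧
      (∀ x y (hxy : H.Adj x y), ∀ x' y' (hxy' : H.Adj x' y'), s(x, y) ≠ s(x', y') →
        Disjoint (walkInterior (P x y hxy)) (walkInterior (P x' y' hxy')))

/-- `G` contains the complete graph on `h` vertices as a topological subgraph. -/
def HasTopK {V : Type*} (G : SimpleGraph V) (h : ℕ) : Prop :=
  IsTopSubgraph (⊤ : SimpleGraph (Fin h)) G

/-- `a` is a constant witnessing the Bollobás–Thomason / Komlós–Szemerédi degree bound: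
for every `h ≥ 1`, every finite simple graph excluding `K_h` as a topological subgraph
has degree sum at most `a·h²·n`. -/
def DegSumConst (a : ℝ) : Prop :=
  ∀ (n h : ℕ) (G : SimpleGraph (Fin n)), 1 ≤ h → ¬ HasTopK G h →
    ∑ v : Fin n, (({u | G.Adj v u}.ncard : ℝ)) ≤ a * (h : ℝ) ^ 2 * (n : ℝ)

/-- One refinement round of Color Refinement on the complete graph on `V`, where the
current vertex partition is `r` and the arc color of `(v,w)` is the pair
`(G.Adj v w, χ v w)` (multiset equality is expressed by equality of all counts). -/
def crStep {V C : Type*} (G : SimpleGraph V) (χ : V → V → C) (r : V → V → Prop) :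
    V → V → Prop := fun x y =>
  r x y ∧ ∀ (z : V) (c₁ c₂ : C),
    ({u | u ≠ x ∧ r u z ∧ χ x u = c₁ ∧ χ u x = c₂ ∧ G.Adj x u}.ncard =
      {u | u ≠ y ∧ r u z ∧ χ y u = c₁ ∧ χ u y = c₂ ∧ G.Adj y u}.ncard) ∧
    ({u | u ≠ x ∧ r u z ∧ χ x u = c₁ ∧ χ u x = c₂ ∧ ¬ G.Adj x u}.ncard =
      {u | u ≠ y ∧ r u z ∧ χ y u = c₁ ∧ χ u y = c₂ ∧ ¬ G.Adj y u}.ncard)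

/-- The Color Refinement stabilization of the partition `r` (iterating the refinement
round enough times to reach the stable partition). -/
def crStable {V C : Type*} [Fintype V] (G : SimpleGraph V) (χ : V → V → C)
    (r : V → V → Prop) : V → V → Prop :=
  (crStep G χ)^[Fintype.card V + 1] r

/-- Split all color classes of size at most `t` into singletons. -/
def splitSmall {V : Type*} (t : ℕ) (r : V → V → Prop) : V → V → Prop := fun x y =>
  r x y ∧ ({u | r u x}.ncard ≤ t → x = y)

/-- The `t`-CR-stable partition obtained from the initial partition `r`: alternately
apply Color Refinement and split the classes of size at most `t`, until stable. -/
def tCRStable {V C : Type*} [Fintype V] (G : SimpleGraph V) (χ : V → V → C) (t : ℕ)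
    (r : V → V → Prop) : V → V → Prop :=
  (fun s => splitSmall t (crStable G χ s))^[Fintype.card V + 1] r

/-- The partition obtained from the vertex coloring `v ↦ χ v v` by individualizing
every vertex of `X`. -/
def indivRel {V C : Type*} (χ : V → V → C) (X : Set V) : V → V → Prop := fun x y =>
  χ x x = χ y y ∧ (x ∈ X ↔ y ∈ X) ∧ (x ∈ X → x = y)

/-- The `t`-closure `cl_t^{(G,χ)}(X)`: the set of vertices whose color class in the
`t`-CR-stable coloring (after individualizing `X`) is a singleton. -/
def clSet {V C : Type*} [Fintype V] (G : SimpleGraph V) (χ : V → V → C) (t : ℕ)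
    (X : Set V) : Set V :=
  {v | {u | tCRStable G χ t (indivRel χ X) u v}.ncard = 1}

/-- The arc relation of the `t`-closure graph of `(G,χ)`. -/
def clArc {V C : Type*} [Fintype V] (G : SimpleGraph V) (χ : V → V → C) (t : ℕ) :
    V → V → Prop := fun v w => v ≠ w ∧ w ∈ clSet G χ t {v}

/-- A vertex is maximal if it lies in a strongly connected component of the
`t`-closure graph without outgoing arcs. -/
def MaximalVtx {V C : Type*} [Fintype V] (G : SimpleGraph V) (χ : V → V → C) (t : ℕ)
    (v : V) : Prop :=
  ∀ u, clArc G χ t v u → clArc G χ t u v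

/-- A vertex coloring is `1`-stable. -/
def IsOneStable {V C : Type*} (G : SimpleGraph V) (lam : V → C) : Prop :=
  ∀ v w, lam v = lam w → ∀ c,
    {u | G.Adj v u ∧ lam u = c}.ncard = {u | G.Adj w u ∧ lam u = c}.ncard

/-- A pair coloring is `2`-stable on the simple graph `G`. -/
def IsTwoStable {V C : Type*} (G : SimpleGraph V) (χ : V → V → C) : Prop :=
  ∀ v w v' w', χ v w = χ v' w' →
    ((v = w ↔ v' = w') ∧ (G.Adj v w ↔ G.Adj v' w') ∧ χ v v = χ v' v' ∧ χ w w = χ w' w') ∧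
    ∀ c₁ c₂, {u | χ v u = c₁ ∧ χ u w = c₂}.ncard = {u | χ v' u = c₁ ∧ χ u w' = c₂}.ncard

/-- A pair coloring is `2`-stable on the directed graph with arc relation `E`. -/
def IsTwoStableDigraph {V C : Type*} (E : V → V → Prop) (χ : V → V → C) : Prop :=
  ∀ v w v' w', χ v w = χ v' w' →
    ((v = w ↔ v' = w') ∧ (E v w ↔ E v' w') ∧ (E w v ↔ E w' v') ∧
      χ v v = χ v' v' ∧ χ w w = χ w' w') ∧
    ∀ c₁ c₂, {u | χ v u = c₁ ∧ χ u w = c₂}.ncard = {u | χ v' u = c₁ ∧ χ u w' = c₂}.ncard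

/-- A coloring of triples is `3`-stable on the simple graph `G`. -/
def IsThreeStable {V C : Type*} (G : SimpleGraph V) (χ₃ : V → V → V → C) : Prop :=
  ∀ v₁ v₂ v₃ w₁ w₂ w₃, χ₃ v₁ v₂ v₃ = χ₃ w₁ w₂ w₃ →
    ((v₁ = v₂ ↔ w₁ = w₂) ∧ (v₁ = v₃ ↔ w₁ = w₃) ∧ (v₂ = v₃ ↔ w₂ = w₃) ∧
      (G.Adj v₁ v₂ ↔ G.Adj w₁ w₂) ∧ (G.Adj v₁ v₃ ↔ G.Adj w₁ w₃) ∧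
      (G.Adj v₂ v₃ ↔ G.Adj w₂ w₃)) ∧
    ∀ c₁ c₂ c₃,
      {u | χ₃ u v₂ v₃ = c₁ ∧ χ₃ v₁ u v₃ = c₂ ∧ χ₃ v₁ v₂ u = c₃}.ncard =
        {u | χ₃ u w₂ w₃ = c₁ ∧ χ₃ w₁ u w₃ = c₂ ∧ χ₃ w₁ w₂ u = c₃}.ncard

/-- Reachability in `G` by a walk avoiding the set `S`. -/
def ReachOutside {V : Type*} (G : SimpleGraph V) (S : Set V) (x y : V) : Prop :=
  ∃ p : G.Walk x y, ∀ z ∈ p.support, z ∉ S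

/-- `Z` is the vertex set of a connected component of the induced subgraph `G − S`. -/
def IsCompOutside {V : Type*} (G : SimpleGraph V) (S Z : Set V) : Prop :=
  ∃ x₀, x₀ ∉ S ∧ Z = {y | ReachOutside G S x₀ y}

/-- The neighborhood `N_G(S)` of a set `S`: all vertices outside `S` with a neighbor in `S`. -/
def nbhdOf {V : Type*} (G : SimpleGraph V) (S : Set V) : Set V :=
  {v | v ∉ S ∧ ∃ u ∈ S, G.Adj v u}

/-- A partition of the vertex set (given as an equivalence relation `r`) is
`λ`-definable: for some set `Cs` of colors attained on off-diagonal pairs, the classes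
of `r` are exactly the connected components of the graph with edges
`{v,w}` (`v ≠ w`) such that `λ(v,w) ∈ Cs`. -/
def LamDefinable {V C : Type*} (lam : V → V → C) (r : V → V → Prop) : Prop :=
  ∃ Cs : Set C, (∀ c ∈ Cs, ∃ v w : V, v ≠ w ∧ lam v w = c) ∧
    ∀ x y, r x y ↔ (SimpleGraph.fromRel (fun v w => lam v w ∈ Cs)).Reachable x y

set_option linter.unusedSectionVars false

section StmtOneAux

variable {V C₃ : Type*} [Fintype V] {G : SimpleGraph V} {χ₃ : V → V → V → C₃}

private lemma ncard_filter {W : Type*} [Fintype W] (P : W → Prop) [DecidablePred P] :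
    {u | P u}.ncard = (Finset.univ.filter P).card := by
  rw [Set.ncard_eq_toFinset_card', Set.toFinset_setOf]

private lemma count_transfer {α : Type*} (f g : V → α)
    (h : ∀ x : α, {u | f u = x}.ncard = {u | g u = x}.ncard)
    (Q : α → Prop) : {u | Q (f u)}.ncard = {u | Q (g u)}.ncard := by
  classical
  rw [ncard_filter, ncard_filter]
  have hf : ∀ u ∈ Finset.univ.filter (fun u => Q (f u)),
      f u ∈ (Finset.univ.image f ∪ Finset.univ.image g).filter Q := by
    intro u hu
    simp only [Finset.mem_filter, Finset.mem_univ, true_and] at hu ⊢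
    exact ⟨Finset.mem_union_left _ (Finset.mem_image_of_mem f (Finset.mem_univ u)), hu⟩
  have hg : ∀ u ∈ Finset.univ.filter (fun u => Q (g u)),
      g u ∈ (Finset.univ.image f ∪ Finset.univ.image g).filter Q := by
    intro u hu
    simp only [Finset.mem_filter, Finset.mem_univ, true_and] at hu ⊢
    exact ⟨Finset.mem_union_right _ (Finset.mem_image_of_mem g (Finset.mem_univ u)), hu⟩
  rw [Finset.card_eq_sum_card_fiberwise hf, Finset.card_eq_sum_card_fiberwise hg]
  refine Finset.sum_congr rfl fun x hx => ?_
  have hQ : Q x := (Finset.mem_filter.mp hx).2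
  have e1 : (Finset.univ.filter (fun u => Q (f u))).filter (fun u => f u = x)
      = Finset.univ.filter (fun u => f u = x) := by
    ext u
    simp only [Finset.mem_filter, Finset.mem_univ, true_and]
    exact ⟨fun h => h.2, fun h => ⟨by rw [h]; exact hQ, h⟩⟩
  have e2 : (Finset.univ.filter (fun u => Q (g u))).filter (fun u => g u = x)
      = Finset.univ.filter (fun u => g u = x) := by
    ext u
    simp only [Finset.mem_filter, Finset.mem_univ, true_and]
    exact ⟨fun h => h.2, fun h => ⟨by rw [h]; exact hQ, h⟩⟩
  rw [e1, e2, ← ncard_filter, ← ncard_filter]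
  exact h x

private lemma count_transfer' {α : Type*} (f g : V → α)
    (h : ∀ x : α, {u | f u = x}.ncard = {u | g u = x}.ncard)
    (Q : α → Prop) (S T : Set V)
    (hS : ∀ u, u ∈ S ↔ Q (f u)) (hT : ∀ u, u ∈ T ↔ Q (g u)) :
    S.ncard = T.ncard := by
  have e1 : S = {u | Q (f u)} := Set.ext hS
  have e2 : T = {u | Q (g u)} := Set.ext hT
  rw [e1, e2]
  exact count_transfer f g h Q

private lemma counts_fib (hst : IsThreeStable G χ₃) {v₁ v₂ v₃ w₁ w₂ w₃ : V}
    (h : χ₃ v₁ v₂ v₃ = χ₃ w₁ w₂ w₃) (x : C₃ × C₃ × C₃) :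
    {u | (χ₃ u v₂ v₃, χ₃ v₁ u v₃, χ₃ v₁ v₂ u) = x}.ncard =
      {u | (χ₃ u w₂ w₃, χ₃ w₁ u w₃, χ₃ w₁ w₂ u) = x}.ncard := by
  obtain ⟨c₁, c₂, c₃⟩ := x
  have hc := (hst _ _ _ _ _ _ h).2 c₁ c₂ c₃
  have e1 : {u | (χ₃ u v₂ v₃, χ₃ v₁ u v₃, χ₃ v₁ v₂ u) = (c₁, c₂, c₃)} =
      {u | χ₃ u v₂ v₃ = c₁ ∧ χ₃ v₁ u v₃ = c₂ ∧ χ₃ v₁ v₂ u = c₃} := by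
    ext u; simp [Prod.ext_iff]
  have e2 : {u | (χ₃ u w₂ w₃, χ₃ w₁ u w₃, χ₃ w₁ w₂ u) = (c₁, c₂, c₃)} =
      {u | χ₃ u w₂ w₃ = c₁ ∧ χ₃ w₁ u w₃ = c₂ ∧ χ₃ w₁ w₂ u = c₃} := by
    ext u; simp [Prod.ext_iff]
  rw [e1, e2]
  exact hc

private lemma pinA (hst : IsThreeStable G χ₃) {a b c a' b' c' : V}
    (h : χ₃ a b c = χ₃ a' b' c') :
    χ₃ a a c = χ₃ a' a' c' ∧ χ₃ a b a = χ₃ a' b' a' := by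
  have hc := (hst _ _ _ _ _ _ h).2 (χ₃ a b c) (χ₃ a a c) (χ₃ a b a)
  have e1 : {u | χ₃ u b c = χ₃ a b c ∧ χ₃ a u c = χ₃ a a c ∧ χ₃ a b u = χ₃ a b a} = {a} := by
    apply Set.eq_singleton_iff_unique_mem.mpr
    refine ⟨⟨rfl, rfl, rfl⟩, fun u hu => ?_⟩
    exact (((hst _ _ _ _ _ _ hu.2.1).1).1.mpr rfl).symm
  rw [e1, Set.ncard_singleton] at hc
  obtain ⟨u', hu'⟩ := Set.ncard_eq_one.mp hc.symm
  have hmem : u' ∈ {u | χ₃ u b' c' = χ₃ a b c ∧ χ₃ a' u c' = χ₃ a a c ∧ χ₃ a' b' u = χ₃ a b a} := by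
    rw [hu']; exact rfl
  obtain ⟨h1, h2, h3⟩ := hmem
  have hua : u' = a' := (((hst _ _ _ _ _ _ h2).1).1.mpr rfl).symm
  subst hua
  exact ⟨h2.symm, h3.symm⟩

private lemma pinB (hst : IsThreeStable G χ₃) {a b c a' b' c' : V}
    (h : χ₃ a b c = χ₃ a' b' c') :
    χ₃ b b c = χ₃ b' b' c' ∧ χ₃ a b b = χ₃ a' b' b' := by
  have hc := (hst _ _ _ _ _ _ h).2 (χ₃ b b c) (χ₃ a b c) (χ₃ a b b)
  have e1 : {u | χ₃ u b c = χ₃ b b c ∧ χ₃ a u c = χ₃ a b c ∧ χ₃ a b u = χ₃ a b b} = {b} := by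
    apply Set.eq_singleton_iff_unique_mem.mpr
    refine ⟨⟨rfl, rfl, rfl⟩, fun u hu => ?_⟩
    exact ((hst _ _ _ _ _ _ hu.1).1).1.mpr rfl
  rw [e1, Set.ncard_singleton] at hc
  obtain ⟨u', hu'⟩ := Set.ncard_eq_one.mp hc.symm
  have hmem : u' ∈ {u | χ₃ u b' c' = χ₃ b b c ∧ χ₃ a' u c' = χ₃ a b c ∧ χ₃ a' b' u = χ₃ a b b} := by
    rw [hu']; exact rfl
  obtain ⟨h1, h2, h3⟩ := hmem
  have hub : u' = b' := ((hst _ _ _ _ _ _ h1).1).1.mpr rfl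
  subst hub
  exact ⟨h1.symm, h3.symm⟩

private lemma pinC (hst : IsThreeStable G χ₃) {a b c a' b' c' : V}
    (h : χ₃ a b c = χ₃ a' b' c') :
    χ₃ c b c = χ₃ c' b' c' ∧ χ₃ a c c = χ₃ a' c' c' := by
  have hc := (hst _ _ _ _ _ _ h).2 (χ₃ c b c) (χ₃ a c c) (χ₃ a b c)
  have e1 : {u | χ₃ u b c = χ₃ c b c ∧ χ₃ a u c = χ₃ a c c ∧ χ₃ a b u = χ₃ a b c} = {c} := by
    apply Set.eq_singleton_iff_unique_mem.mpr
    refine ⟨⟨rfl, rfl, rfl⟩, fun u hu => ?_⟩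
    exact ((hst _ _ _ _ _ _ hu.2.1).1).2.2.1.mpr rfl
  rw [e1, Set.ncard_singleton] at hc
  obtain ⟨u', hu'⟩ := Set.ncard_eq_one.mp hc.symm
  have hmem : u' ∈ {u | χ₃ u b' c' = χ₃ c b c ∧ χ₃ a' u c' = χ₃ a c c ∧ χ₃ a' b' u = χ₃ a b c} := by
    rw [hu']; exact rfl
  obtain ⟨h1, h2, h3⟩ := hmem
  have huc : u' = c' := ((hst _ _ _ _ _ _ h2).1).2.2.1.mpr rfl
  subst huc
  exact ⟨h1.symm, h2.symm⟩

private lemma link_bcc (hst : IsThreeStable G χ₃) {a b c a' b' c' : V}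
    (h : χ₃ a b c = χ₃ a' b' c') : χ₃ b c c = χ₃ b' c' c' :=
  (pinC hst (pinB hst h).1).2

private lemma rev3 (hst : IsThreeStable G χ₃) {x y x' y' : V}
    (h : χ₃ x y y = χ₃ x' y' y') : χ₃ y x x = χ₃ y' x' x' :=
  (pinC hst (pinB hst (pinA hst h).2).1).2

private lemma link_cbb (hst : IsThreeStable G χ₃) {a b c a' b' c' : V}
    (h : χ₃ a b c = χ₃ a' b' c') : χ₃ c b b = χ₃ c' b' b' :=
  rev3 hst (link_bcc hst h)

private lemma link_bbb (hst : IsThreeStable G χ₃) {a b c a' b' c' : V}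
    (h : χ₃ a b c = χ₃ a' b' c') : χ₃ b b b = χ₃ b' b' b' :=
  (pinA hst (pinB hst h).1).2

private lemma link_ccc (hst : IsThreeStable G χ₃) {a b c a' b' c' : V}
    (h : χ₃ a b c = χ₃ a' b' c') : χ₃ c c c = χ₃ c' c' c' :=
  (pinB hst (link_bcc hst h)).1

private lemma link_aaa (hst : IsThreeStable G χ₃) {a b c a' b' c' : V}
    (h : χ₃ a b c = χ₃ a' b' c') : χ₃ a a a = χ₃ a' a' a' :=
  (pinA hst (pinA hst h).1).2

private lemma link_abb (hst : IsThreeStable G χ₃) {a b c a' b' c' : V}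
    (h : χ₃ a b c = χ₃ a' b' c') : χ₃ a b b = χ₃ a' b' b' :=
  (pinB hst h).2

private lemma link_acc (hst : IsThreeStable G χ₃) {a b c a' b' c' : V}
    (h : χ₃ a b c = χ₃ a' b' c') : χ₃ a c c = χ₃ a' c' c' :=
  (pinC hst h).2

/-- The cross-instance invariant maintained through the whole `t`-CR computation. -/
private def INV (χ₃ : V → V → V → C₃) (r : V → V → V → Prop) : Prop :=
  ∀ v a b v' a' b', χ₃ v a b = χ₃ v' a' b' →
    (r v a b ↔ r v' a' b') ∧ (r v b a ↔ r v' b' a')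

/-- The counting condition of `crStep` for the pair coloring `(x,y) ↦ χ₃ x y y`. -/
private def CC (G : SimpleGraph V) (χ₃ : V → V → V → C₃) (r : V → V → Prop) (x y : V) :
    Prop :=
  ∀ (z : V) (c₁ c₂ : C₃),
    ({u | u ≠ x ∧ r u z ∧ χ₃ x u u = c₁ ∧ χ₃ u x x = c₂ ∧ G.Adj x u}.ncard =
      {u | u ≠ y ∧ r u z ∧ χ₃ y u u = c₁ ∧ χ₃ u y y = c₂ ∧ G.Adj y u}.ncard) ∧
    ({u | u ≠ x ∧ r u z ∧ χ₃ x u u = c₁ ∧ χ₃ u x x = c₂ ∧ ¬ G.Adj x u}.ncard =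
      {u | u ≠ y ∧ r u z ∧ χ₃ y u u = c₁ ∧ χ₃ u y y = c₂ ∧ ¬ G.Adj y u}.ncard)

private lemma K1 (hst : IsThreeStable G χ₃) {r : V → V → V → Prop} (hr : INV χ₃ r)
    (A : V → V → Prop)
    (hA : ∀ a b c a' b' c', χ₃ a b c = χ₃ a' b' c' → (A b c ↔ A b' c'))
    {v x y v' x' y' : V} (h : χ₃ v x y = χ₃ v' x' y') (c₁ c₂ : C₃) :
    {w | w ≠ x ∧ r v w y ∧ χ₃ x w w = c₁ ∧ χ₃ w x x = c₂ ∧ A x w}.ncard =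
      {w | w ≠ x' ∧ r v' w y' ∧ χ₃ x' w w = c₁ ∧ χ₃ w x' x' = c₂ ∧ A x' w}.ncard := by
  refine count_transfer' (fun u => (χ₃ u x y, χ₃ v u y, χ₃ v x u))
      (fun u => (χ₃ u x' y', χ₃ v' u y', χ₃ v' x' u)) (counts_fib hst h)
      (fun tc =>
        ((∃ p q, χ₃ v p q = tc.2.1 ∧ r v p q) ∨ (∃ p q, χ₃ v' p q = tc.2.1 ∧ r v' p q)) ∧
        ((∃ p, χ₃ v x p = tc.2.2 ∧ p ≠ x ∧ χ₃ x p p = c₁ ∧ χ₃ p x x = c₂ ∧ A x p) ∨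
         (∃ p, χ₃ v' x' p = tc.2.2 ∧ p ≠ x' ∧ χ₃ x' p p = c₁ ∧ χ₃ p x' x' = c₂ ∧ A x' p)))
      _ _ ?_ ?_
  · intro w
    simp only [Set.mem_setOf_eq]
    constructor
    · rintro ⟨hne, hrw, hc1, hc2, hAx⟩
      exact ⟨Or.inl ⟨w, y, rfl, hrw⟩, Or.inl ⟨w, rfl, hne, hc1, hc2, hAx⟩⟩
    · rintro ⟨h1, h2⟩
      have hrw : r v w y := by
        rcases h1 with ⟨p, q, e, hp⟩ | ⟨p, q, e, hp⟩
        · exact (hr v p q v w y e).1.mp hp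
        · exact (hr v' p q v w y e).1.mp hp
      rcases h2 with ⟨p, e, hpx, hc1, hc2, hAp⟩ | ⟨p, e, hpx, hc1, hc2, hAp⟩
      · have at23 := ((hst _ _ _ _ _ _ e).1).2.2.1
        exact ⟨fun hwx => hpx (at23.mpr hwx.symm).symm, hrw,
          (link_bcc hst e).symm.trans hc1, (link_cbb hst e).symm.trans hc2,
          (hA _ _ _ _ _ _ e).mp hAp⟩
      · have at23 := ((hst _ _ _ _ _ _ e).1).2.2.1
        exact ⟨fun hwx => hpx (at23.mpr hwx.symm).symm, hrw,
          (link_bcc hst e).symm.trans hc1, (link_cbb hst e).symm.trans hc2,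
          (hA _ _ _ _ _ _ e).mp hAp⟩
  · intro w
    simp only [Set.mem_setOf_eq]
    constructor
    · rintro ⟨hne, hrw, hc1, hc2, hAx⟩
      exact ⟨Or.inr ⟨w, y', rfl, hrw⟩, Or.inr ⟨w, rfl, hne, hc1, hc2, hAx⟩⟩
    · rintro ⟨h1, h2⟩
      have hrw : r v' w y' := by
        rcases h1 with ⟨p, q, e, hp⟩ | ⟨p, q, e, hp⟩
        · exact (hr v p q v' w y' e).1.mp hp
        · exact (hr v' p q v' w y' e).1.mp hp
      rcases h2 with ⟨p, e, hpx, hc1, hc2, hAp⟩ | ⟨p, e, hpx, hc1, hc2, hAp⟩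
      · have at23 := ((hst _ _ _ _ _ _ e).1).2.2.1
        exact ⟨fun hwx => hpx (at23.mpr hwx.symm).symm, hrw,
          (link_bcc hst e).symm.trans hc1, (link_cbb hst e).symm.trans hc2,
          (hA _ _ _ _ _ _ e).mp hAp⟩
      · have at23 := ((hst _ _ _ _ _ _ e).1).2.2.1
        exact ⟨fun hwx => hpx (at23.mpr hwx.symm).symm, hrw,
          (link_bcc hst e).symm.trans hc1, (link_cbb hst e).symm.trans hc2,
          (hA _ _ _ _ _ _ e).mp hAp⟩

private lemma K2 (hst : IsThreeStable G χ₃) {r : V → V → V → Prop} (hr : INV χ₃ r)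
    (A : V → V → Prop)
    (hA : ∀ a b c a' b' c', χ₃ a b c = χ₃ a' b' c' → (A b c ↔ A b' c'))
    (hAs : ∀ p q, A p q ↔ A q p)
    {v x y v' x' y' : V} (h : χ₃ v y x = χ₃ v' y' x') (c₁ c₂ : C₃) :
    {w | w ≠ x ∧ r v w y ∧ χ₃ x w w = c₁ ∧ χ₃ w x x = c₂ ∧ A x w}.ncard =
      {w | w ≠ x' ∧ r v' w y' ∧ χ₃ x' w w = c₁ ∧ χ₃ w x' x' = c₂ ∧ A x' w}.ncard := by
  refine count_transfer' (fun u => (χ₃ u y x, χ₃ v u x, χ₃ v y u))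
      (fun u => (χ₃ u y' x', χ₃ v' u x', χ₃ v' y' u)) (counts_fib hst h)
      (fun tc =>
        ((∃ p q, χ₃ v p q = tc.2.2 ∧ r v q p) ∨ (∃ p q, χ₃ v' p q = tc.2.2 ∧ r v' q p)) ∧
        ((∃ p, χ₃ v p x = tc.2.1 ∧ p ≠ x ∧ χ₃ x p p = c₁ ∧ χ₃ p x x = c₂ ∧ A x p) ∨
         (∃ p, χ₃ v' p x' = tc.2.1 ∧ p ≠ x' ∧ χ₃ x' p p = c₁ ∧ χ₃ p x' x' = c₂ ∧ A x' p)))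
      _ _ ?_ ?_
  · intro w
    simp only [Set.mem_setOf_eq]
    constructor
    · rintro ⟨hne, hrw, hc1, hc2, hAx⟩
      exact ⟨Or.inl ⟨y, w, rfl, hrw⟩, Or.inl ⟨w, rfl, hne, hc1, hc2, hAx⟩⟩
    · rintro ⟨h1, h2⟩
      have hrw : r v w y := by
        rcases h1 with ⟨p, q, e, hp⟩ | ⟨p, q, e, hp⟩
        · exact (hr v p q v y w e).2.mp hp
        · exact (hr v' p q v y w e).2.mp hp
      rcases h2 with ⟨p, e, hpx, hc1, hc2, hAp⟩ | ⟨p, e, hpx, hc1, hc2, hAp⟩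
      · have at23 := ((hst _ _ _ _ _ _ e).1).2.2.1
        exact ⟨fun hwx => hpx (at23.mpr hwx), hrw,
          (link_cbb hst e).symm.trans hc1, (link_bcc hst e).symm.trans hc2,
          (hAs x w).mpr ((hA _ _ _ _ _ _ e).mp ((hAs x p).mp hAp))⟩
      · have at23 := ((hst _ _ _ _ _ _ e).1).2.2.1
        exact ⟨fun hwx => hpx (at23.mpr hwx), hrw,
          (link_cbb hst e).symm.trans hc1, (link_bcc hst e).symm.trans hc2,
          (hAs x w).mpr ((hA _ _ _ _ _ _ e).mp ((hAs x' p).mp hAp))⟩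
  · intro w
    simp only [Set.mem_setOf_eq]
    constructor
    · rintro ⟨hne, hrw, hc1, hc2, hAx⟩
      exact ⟨Or.inr ⟨y', w, rfl, hrw⟩, Or.inr ⟨w, rfl, hne, hc1, hc2, hAx⟩⟩
    · rintro ⟨h1, h2⟩
      have hrw : r v' w y' := by
        rcases h1 with ⟨p, q, e, hp⟩ | ⟨p, q, e, hp⟩
        · exact (hr v p q v' y' w e).2.mp hp
        · exact (hr v' p q v' y' w e).2.mp hp
      rcases h2 with ⟨p, e, hpx, hc1, hc2, hAp⟩ | ⟨p, e, hpx, hc1, hc2, hAp⟩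
      · have at23 := ((hst _ _ _ _ _ _ e).1).2.2.1
        exact ⟨fun hwx => hpx (at23.mpr hwx), hrw,
          (link_cbb hst e).symm.trans hc1, (link_bcc hst e).symm.trans hc2,
          (hAs x' w).mpr ((hA _ _ _ _ _ _ e).mp ((hAs x p).mp hAp))⟩
      · have at23 := ((hst _ _ _ _ _ _ e).1).2.2.1
        exact ⟨fun hwx => hpx (at23.mpr hwx), hrw,
          (link_cbb hst e).symm.trans hc1, (link_bcc hst e).symm.trans hc2,
          (hAs x' w).mpr ((hA _ _ _ _ _ _ e).mp ((hAs x' p).mp hAp))⟩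

private lemma classCard (hst : IsThreeStable G χ₃) {r : V → V → V → Prop}
    (hr : INV χ₃ r) {v p v' p' : V} (h : χ₃ v p p = χ₃ v' p' p') :
    {u | r v u p}.ncard = {u | r v' u p'}.ncard := by
  refine count_transfer' (fun u => (χ₃ u p p, χ₃ v u p, χ₃ v p u))
      (fun u => (χ₃ u p' p', χ₃ v' u p', χ₃ v' p' u)) (counts_fib hst h)
      (fun tc => (∃ s q, χ₃ v s q = tc.2.1 ∧ r v s q) ∨
        (∃ s q, χ₃ v' s q = tc.2.1 ∧ r v' s q)) _ _ ?_ ?_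
  · intro u
    simp only [Set.mem_setOf_eq]
    constructor
    · intro hu; exact Or.inl ⟨u, p, rfl, hu⟩
    · rintro (⟨s, q, e, hs⟩ | ⟨s, q, e, hs⟩)
      · exact (hr v s q v u p e).1.mp hs
      · exact (hr v' s q v u p e).1.mp hs
  · intro u
    simp only [Set.mem_setOf_eq]
    constructor
    · intro hu; exact Or.inr ⟨u, p', rfl, hu⟩
    · rintro (⟨s, q, e, hs⟩ | ⟨s, q, e, hs⟩)
      · exact (hr v s q v' u p' e).1.mp hs
      · exact (hr v' s q v' u p' e).1.mp hs

private lemma matchz (hst : IsThreeStable G χ₃) {v a b v' a' b' : V}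
    (h : χ₃ v a b = χ₃ v' a' b') (z' : V) :
    ∃ z, χ₃ v z b = χ₃ v' z' b' ∧ χ₃ v a z = χ₃ v' a' z' := by
  have hfib := counts_fib hst h (χ₃ z' a' b', χ₃ v' z' b', χ₃ v' a' z')
  have hpos : 0 < {u | (χ₃ u a b, χ₃ v u b, χ₃ v a u) =
      (χ₃ z' a' b', χ₃ v' z' b', χ₃ v' a' z')}.ncard := by
    rw [hfib]
    exact (Set.ncard_pos (Set.toFinite _)).mpr ⟨z', rfl⟩
  obtain ⟨z, hz⟩ := ((Set.ncard_pos (Set.toFinite _)).mp hpos)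
  simp only [Set.mem_setOf_eq, Prod.mk.injEq] at hz
  exact ⟨z, hz.2.1, hz.2.2⟩

private lemma K34 (hst : IsThreeStable G χ₃) {r : V → V → V → Prop} (hr : INV χ₃ r)
    {v a b v' a' b' : V} (h : χ₃ v a b = χ₃ v' a' b') :
    (CC G χ₃ (r v) a b ↔ CC G χ₃ (r v') a' b') ∧
      (CC G χ₃ (r v) b a ↔ CC G χ₃ (r v') b' a') := by
  have hAadj : ∀ a b c a' b' c', χ₃ a b c = χ₃ a' b' c' → (G.Adj b c ↔ G.Adj b' c') :=
    fun _ _ _ _ _ _ e => ((hst _ _ _ _ _ _ e).1).2.2.2.2.2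
  have hAnadj : ∀ a b c a' b' c', χ₃ a b c = χ₃ a' b' c' →
      ((¬ G.Adj b c) ↔ (¬ G.Adj b' c')) :=
    fun a b c a' b' c' e => not_congr (hAadj a b c a' b' c' e)
  have hs : ∀ p q, G.Adj p q ↔ G.Adj q p := fun p q => G.adj_comm p q
  have hs' : ∀ p q, (¬ G.Adj p q) ↔ (¬ G.Adj q p) := fun p q => not_congr (hs p q)
  constructor
  · constructor
    · intro cc z' c₁ c₂
      obtain ⟨z, e2, e3⟩ := matchz hst h z'
      have k1a : {u | u ≠ a ∧ r v u z ∧ χ₃ a u u = c₁ ∧ χ₃ u a a = c₂ ∧ G.Adj a u}.ncard =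
          {u | u ≠ a' ∧ r v' u z' ∧ χ₃ a' u u = c₁ ∧ χ₃ u a' a' = c₂ ∧ G.Adj a' u}.ncard :=
        K1 hst hr G.Adj hAadj e3 c₁ c₂
      have k1n : {u | u ≠ a ∧ r v u z ∧ χ₃ a u u = c₁ ∧ χ₃ u a a = c₂ ∧ ¬ G.Adj a u}.ncard =
          {u | u ≠ a' ∧ r v' u z' ∧ χ₃ a' u u = c₁ ∧ χ₃ u a' a' = c₂ ∧ ¬ G.Adj a' u}.ncard :=
        K1 hst hr (fun p q => ¬ G.Adj p q) hAnadj e3 c₁ c₂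
      have k2a : {u | u ≠ b ∧ r v u z ∧ χ₃ b u u = c₁ ∧ χ₃ u b b = c₂ ∧ G.Adj b u}.ncard =
          {u | u ≠ b' ∧ r v' u z' ∧ χ₃ b' u u = c₁ ∧ χ₃ u b' b' = c₂ ∧ G.Adj b' u}.ncard :=
        K2 hst hr G.Adj hAadj hs e2 c₁ c₂
      have k2n : {u | u ≠ b ∧ r v u z ∧ χ₃ b u u = c₁ ∧ χ₃ u b b = c₂ ∧ ¬ G.Adj b u}.ncard =
          {u | u ≠ b' ∧ r v' u z' ∧ χ₃ b' u u = c₁ ∧ χ₃ u b' b' = c₂ ∧ ¬ G.Adj b' u}.ncard :=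
        K2 hst hr (fun p q => ¬ G.Adj p q) hAnadj hs' e2 c₁ c₂
      exact ⟨by rw [← k1a, ← k2a]; exact (cc z c₁ c₂).1,
        by rw [← k1n, ← k2n]; exact (cc z c₁ c₂).2⟩
    · intro cc z c₁ c₂
      obtain ⟨z', e2, e3⟩ := matchz hst h.symm z
      have k1a : {u | u ≠ a ∧ r v u z ∧ χ₃ a u u = c₁ ∧ χ₃ u a a = c₂ ∧ G.Adj a u}.ncard =
          {u | u ≠ a' ∧ r v' u z' ∧ χ₃ a' u u = c₁ ∧ χ₃ u a' a' = c₂ ∧ G.Adj a' u}.ncard :=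
        K1 hst hr G.Adj hAadj e3.symm c₁ c₂
      have k1n : {u | u ≠ a ∧ r v u z ∧ χ₃ a u u = c₁ ∧ χ₃ u a a = c₂ ∧ ¬ G.Adj a u}.ncard =
          {u | u ≠ a' ∧ r v' u z' ∧ χ₃ a' u u = c₁ ∧ χ₃ u a' a' = c₂ ∧ ¬ G.Adj a' u}.ncard :=
        K1 hst hr (fun p q => ¬ G.Adj p q) hAnadj e3.symm c₁ c₂
      have k2a : {u | u ≠ b ∧ r v u z ∧ χ₃ b u u = c₁ ∧ χ₃ u b b = c₂ ∧ G.Adj b u}.ncard =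
          {u | u ≠ b' ∧ r v' u z' ∧ χ₃ b' u u = c₁ ∧ χ₃ u b' b' = c₂ ∧ G.Adj b' u}.ncard :=
        K2 hst hr G.Adj hAadj hs e2.symm c₁ c₂
      have k2n : {u | u ≠ b ∧ r v u z ∧ χ₃ b u u = c₁ ∧ χ₃ u b b = c₂ ∧ ¬ G.Adj b u}.ncard =
          {u | u ≠ b' ∧ r v' u z' ∧ χ₃ b' u u = c₁ ∧ χ₃ u b' b' = c₂ ∧ ¬ G.Adj b' u}.ncard :=
        K2 hst hr (fun p q => ¬ G.Adj p q) hAnadj hs' e2.symm c₁ c₂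
      exact ⟨by rw [k1a, k2a]; exact (cc z' c₁ c₂).1,
        by rw [k1n, k2n]; exact (cc z' c₁ c₂).2⟩
  · constructor
    · intro cc z' c₁ c₂
      obtain ⟨z, e2, e3⟩ := matchz hst h z'
      have k1a : {u | u ≠ a ∧ r v u z ∧ χ₃ a u u = c₁ ∧ χ₃ u a a = c₂ ∧ G.Adj a u}.ncard =
          {u | u ≠ a' ∧ r v' u z' ∧ χ₃ a' u u = c₁ ∧ χ₃ u a' a' = c₂ ∧ G.Adj a' u}.ncard :=
        K1 hst hr G.Adj hAadj e3 c₁ c₂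
      have k1n : {u | u ≠ a ∧ r v u z ∧ χ₃ a u u = c₁ ∧ χ₃ u a a = c₂ ∧ ¬ G.Adj a u}.ncard =
          {u | u ≠ a' ∧ r v' u z' ∧ χ₃ a' u u = c₁ ∧ χ₃ u a' a' = c₂ ∧ ¬ G.Adj a' u}.ncard :=
        K1 hst hr (fun p q => ¬ G.Adj p q) hAnadj e3 c₁ c₂
      have k2a : {u | u ≠ b ∧ r v u z ∧ χ₃ b u u = c₁ ∧ χ₃ u b b = c₂ ∧ G.Adj b u}.ncard =
          {u | u ≠ b' ∧ r v' u z' ∧ χ₃ b' u u = c₁ ∧ χ₃ u b' b' = c₂ ∧ G.Adj b' u}.ncard :=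
        K2 hst hr G.Adj hAadj hs e2 c₁ c₂
      have k2n : {u | u ≠ b ∧ r v u z ∧ χ₃ b u u = c₁ ∧ χ₃ u b b = c₂ ∧ ¬ G.Adj b u}.ncard =
          {u | u ≠ b' ∧ r v' u z' ∧ χ₃ b' u u = c₁ ∧ χ₃ u b' b' = c₂ ∧ ¬ G.Adj b' u}.ncard :=
        K2 hst hr (fun p q => ¬ G.Adj p q) hAnadj hs' e2 c₁ c₂
      exact ⟨by rw [← k2a, ← k1a]; exact (cc z c₁ c₂).1,
        by rw [← k2n, ← k1n]; exact (cc z c₁ c₂).2⟩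
    · intro cc z c₁ c₂
      obtain ⟨z', e2, e3⟩ := matchz hst h.symm z
      have k1a : {u | u ≠ a ∧ r v u z ∧ χ₃ a u u = c₁ ∧ χ₃ u a a = c₂ ∧ G.Adj a u}.ncard =
          {u | u ≠ a' ∧ r v' u z' ∧ χ₃ a' u u = c₁ ∧ χ₃ u a' a' = c₂ ∧ G.Adj a' u}.ncard :=
        K1 hst hr G.Adj hAadj e3.symm c₁ c₂
      have k1n : {u | u ≠ a ∧ r v u z ∧ χ₃ a u u = c₁ ∧ χ₃ u a a = c₂ ∧ ¬ G.Adj a u}.ncard =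
          {u | u ≠ a' ∧ r v' u z' ∧ χ₃ a' u u = c₁ ∧ χ₃ u a' a' = c₂ ∧ ¬ G.Adj a' u}.ncard :=
        K1 hst hr (fun p q => ¬ G.Adj p q) hAnadj e3.symm c₁ c₂
      have k2a : {u | u ≠ b ∧ r v u z ∧ χ₃ b u u = c₁ ∧ χ₃ u b b = c₂ ∧ G.Adj b u}.ncard =
          {u | u ≠ b' ∧ r v' u z' ∧ χ₃ b' u u = c₁ ∧ χ₃ u b' b' = c₂ ∧ G.Adj b' u}.ncard :=
        K2 hst hr G.Adj hAadj hs e2.symm c₁ c₂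
      have k2n : {u | u ≠ b ∧ r v u z ∧ χ₃ b u u = c₁ ∧ χ₃ u b b = c₂ ∧ ¬ G.Adj b u}.ncard =
          {u | u ≠ b' ∧ r v' u z' ∧ χ₃ b' u u = c₁ ∧ χ₃ u b' b' = c₂ ∧ ¬ G.Adj b' u}.ncard :=
        K2 hst hr (fun p q => ¬ G.Adj p q) hAnadj hs' e2.symm c₁ c₂
      exact ⟨by rw [k2a, k1a]; exact (cc z' c₁ c₂).1,
        by rw [k2n, k1n]; exact (cc z' c₁ c₂).2⟩

private lemma stepInv (hst : IsThreeStable G χ₃) {r : V → V → V → Prop}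
    (hr : INV χ₃ r) :
    INV χ₃ (fun v => crStep G (fun p q => χ₃ p q q) (r v)) := by
  intro v a b v' a' b' h
  have hk := K34 hst hr h
  have h1 := hr v a b v' a' b' h
  constructor
  · show (r v a b ∧ CC G χ₃ (r v) a b) ↔ (r v' a' b' ∧ CC G χ₃ (r v') a' b')
    exact and_congr h1.1 hk.1
  · show (r v b a ∧ CC G χ₃ (r v) b a) ↔ (r v' b' a' ∧ CC G χ₃ (r v') b' a')
    exact and_congr h1.2 hk.2

private lemma baseInv (hst : IsThreeStable G χ₃) :
    INV χ₃ (fun v => indivRel (fun p q => χ₃ p q q) ({v} : Set V)) := by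
  intro v a b v' a' b' h
  obtain ⟨e12, e13, e23, -, -, -⟩ := (hst _ _ _ _ _ _ h).1
  have daa : χ₃ a a a = χ₃ a' a' a' := link_bbb hst h
  have dbb : χ₃ b b b = χ₃ b' b' b' := link_ccc hst h
  have ma : (a ∈ ({v} : Set V)) ↔ (a' ∈ ({v'} : Set V)) := by
    simp only [Set.mem_singleton_iff]
    exact eq_comm.trans (e12.trans eq_comm)
  have mb : (b ∈ ({v} : Set V)) ↔ (b' ∈ ({v'} : Set V)) := by
    simp only [Set.mem_singleton_iff]
    exact eq_comm.trans (e13.trans eq_comm)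
  constructor
  · show (χ₃ a a a = χ₃ b b b ∧ ((a ∈ ({v} : Set V)) ↔ b ∈ ({v} : Set V)) ∧
        ((a ∈ ({v} : Set V)) → a = b)) ↔
      (χ₃ a' a' a' = χ₃ b' b' b' ∧ ((a' ∈ ({v'} : Set V)) ↔ b' ∈ ({v'} : Set V)) ∧
        ((a' ∈ ({v'} : Set V)) → a' = b'))
    refine and_congr ?_ (and_congr (iff_congr ma mb) (imp_congr ma e23))
    rw [daa, dbb]
  · show (χ₃ b b b = χ₃ a a a ∧ ((b ∈ ({v} : Set V)) ↔ a ∈ ({v} : Set V)) ∧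
        ((b ∈ ({v} : Set V)) → b = a)) ↔
      (χ₃ b' b' b' = χ₃ a' a' a' ∧ ((b' ∈ ({v'} : Set V)) ↔ a' ∈ ({v'} : Set V)) ∧
        ((b' ∈ ({v'} : Set V)) → b' = a'))
    refine and_congr ?_ (and_congr (iff_congr mb ma)
      (imp_congr mb (eq_comm.trans (e23.trans eq_comm))))
    rw [daa, dbb]

private lemma splitInv (hst : IsThreeStable G χ₃) (t : ℕ) {r : V → V → V → Prop}
    (hr : INV χ₃ r) :
    INV χ₃ (fun v => splitSmall t (r v)) := by
  intro v a b v' a' b' h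
  obtain ⟨-, -, e23, -, -, -⟩ := (hst _ _ _ _ _ _ h).1
  have ca : {u | r v u a}.ncard = {u | r v' u a'}.ncard :=
    classCard hst hr (link_abb hst h)
  have cb : {u | r v u b}.ncard = {u | r v' u b'}.ncard :=
    classCard hst hr (link_acc hst h)
  have hh := hr v a b v' a' b' h
  constructor
  · show (r v a b ∧ ({u | r v u a}.ncard ≤ t → a = b)) ↔
      (r v' a' b' ∧ ({u | r v' u a'}.ncard ≤ t → a' = b'))
    exact and_congr hh.1 (imp_congr (by rw [ca]) e23)
  · show (r v b a ∧ ({u | r v u b}.ncard ≤ t → b = a)) ↔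
      (r v' b' a' ∧ ({u | r v' u b'}.ncard ≤ t → b' = a'))
    exact and_congr hh.2 (imp_congr (by rw [cb]) (eq_comm.trans (e23.trans eq_comm)))

private lemma crStableInv (hst : IsThreeStable G χ₃) {r : V → V → V → Prop}
    (hr : INV χ₃ r) :
    INV χ₃ (fun v => crStable G (fun p q => χ₃ p q q) (r v)) := by
  have key : ∀ k, INV χ₃ (fun v => (crStep G (fun p q => χ₃ p q q))^[k] (r v)) := by
    intro k
    induction k with
    | zero => simpa using hr
    | succ n ih =>
        have hstep := stepInv hst ih
        simpa only [Function.iterate_succ_apply'] using hstep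
  exact key _

private lemma tCRInv (hst : IsThreeStable G χ₃) (t : ℕ) :
    INV χ₃ (fun v => tCRStable G (fun p q => χ₃ p q q) t
      (indivRel (fun p q => χ₃ p q q) ({v} : Set V))) := by
  have key : ∀ k, INV χ₃ (fun v =>
      (fun s => splitSmall t (crStable G (fun p q => χ₃ p q q) s))^[k]
        (indivRel (fun p q => χ₃ p q q) ({v} : Set V))) := by
    intro k
    induction k with
    | zero => simpa using baseInv hst
    | succ n ih =>
        have hstep := splitInv hst t (crStableInv hst ih)
        simpa only [Function.iterate_succ_apply'] using hstep
  exact key _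

end StmtOneAux

/-- Let `G` be a finite simple graph, `t ∈ ℕ`, `χ₃` a 3-stable coloring of
`V(G)³`, and define the pair-coloring `χ(v,w) := χ₃(v,w,w)`. Then `χ` is 2-stable (in the
directed sense) on the `t`-closure graph `H` of `(G,χ)`. -/
theorem stmt_1 {V C₃ : Type*} [Fintype V]
    (G : SimpleGraph V) (t : ℕ)
    (χ₃ : V → V → V → C₃) (hstable : IsThreeStable G χ₃) :
    IsTwoStableDigraph (clArc G (fun x y => χ₃ x y y) t) (fun x y => χ₃ x y y) := by
  classical
  intro v w v' w' h
  have h0 : χ₃ v w w = χ₃ v' w' w' := h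
  obtain ⟨e12, e13, e23, -, -, -⟩ := (hstable _ _ _ _ _ _ h0).1
  have hrel := tCRInv (G := G) hstable t
  have hwv : χ₃ w v v = χ₃ w' v' v' := rev3 hstable h0
  have hclmem : ∀ p q p' q', χ₃ p q q = χ₃ p' q' q' →
      ((q ∈ clSet G (fun x y => χ₃ x y y) t {p}) ↔
        (q' ∈ clSet G (fun x y => χ₃ x y y) t {p'})) := by
    intro p q p' q' hpq
    have hc : {u | tCRStable G (fun x y => χ₃ x y y) t
          (indivRel (fun x y => χ₃ x y y) ({p} : Set V)) u q}.ncard =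
        {u | tCRStable G (fun x y => χ₃ x y y) t
          (indivRel (fun x y => χ₃ x y y) ({p'} : Set V)) u q'}.ncard :=
      classCard (r := fun b => tCRStable G (fun x y => χ₃ x y y) t
        (indivRel (fun x y => χ₃ x y y) ({b} : Set V))) hstable hrel hpq
    simp only [clSet, Set.mem_setOf_eq]
    rw [hc]
  have hcount : ∀ c₁ c₂ : C₃,
      {u | χ₃ v u u = c₁ ∧ χ₃ u w w = c₂}.ncard =
        {u | χ₃ v' u u = c₁ ∧ χ₃ u w' w' = c₂}.ncard := by
    intro c₁ c₂
    refine count_transfer' (fun u => (χ₃ u w w, χ₃ v u w, χ₃ v w u))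
        (fun u => (χ₃ u w' w', χ₃ v' u w', χ₃ v' w' u)) (counts_fib hstable h0)
        (fun tc => tc.1 = c₂ ∧
          ((∃ p, χ₃ v p w = tc.2.1 ∧ χ₃ v p p = c₁) ∨
            (∃ p, χ₃ v' p w' = tc.2.1 ∧ χ₃ v' p p = c₁))) _ _ ?_ ?_
    · intro u
      simp only [Set.mem_setOf_eq]
      constructor
      · rintro ⟨h1, h2⟩
        exact ⟨h2, Or.inl ⟨u, rfl, h1⟩⟩
      · rintro ⟨h2, (⟨p, e, hcp⟩ | ⟨p, e, hcp⟩)⟩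
        · exact ⟨(link_abb hstable e).symm.trans hcp, h2⟩
        · exact ⟨(link_abb hstable e).symm.trans hcp, h2⟩
    · intro u
      simp only [Set.mem_setOf_eq]
      constructor
      · rintro ⟨h1, h2⟩
        exact ⟨h2, Or.inr ⟨u, rfl, h1⟩⟩
      · rintro ⟨h2, (⟨p, e, hcp⟩ | ⟨p, e, hcp⟩)⟩
        · exact ⟨(link_abb hstable e).symm.trans hcp, h2⟩
        · exact ⟨(link_abb hstable e).symm.trans hcp, h2⟩
  refine ⟨⟨e12, ?_, ?_, ?_, ?_⟩, hcount⟩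
  · show (v ≠ w ∧ w ∈ clSet G (fun x y => χ₃ x y y) t {v}) ↔
      (v' ≠ w' ∧ w' ∈ clSet G (fun x y => χ₃ x y y) t {v'})
    exact and_congr (not_congr e12) (hclmem v w v' w' h0)
  · show (w ≠ v ∧ v ∈ clSet G (fun x y => χ₃ x y y) t {w}) ↔
      (w' ≠ v' ∧ v' ∈ clSet G (fun x y => χ₃ x y y) t {w'})
    exact and_congr (not_congr (eq_comm.trans (e12.trans eq_comm))) (hclmem w v w' v' hwv)
  · exact link_aaa hstable h0
  · exact link_bbb hstable h0
end

section
/- Let G be a finite simple graph with a pair-coloring χ and let t ∈ ℕ. For all u,v ∈ V(G): if v ∈ cl_t^{(G,χ)}(u), then cl_t^{(G,χ)}(v) ⊆ cl_t^{(G,χ)}(u). In particular, if (u,v) and (v,w) are arcs of the t-closure graph of (G,χ) and u ≠ w, then (u,w) is an arc of the t-closure graph. -/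
open SimpleGraph

section AuxStmt2

variable {V C : Type*} [Fintype V]

private lemma ncard_eq_filter (p : V → Prop) [DecidablePred p] :
    {u | p u}.ncard = (Finset.univ.filter p).card := by
  rw [← Set.ncard_coe_finset]
  congr 1
  ext u; simp

private lemma count_mono {r s : V → V → Prop} (hr : Equivalence r) (hs : Equivalence s)
    (hrs : ∀ a b, r a b → s a b) (Qx Qy : V → Prop)
    (h : ∀ z, {u | Qx u ∧ r u z}.ncard = {u | Qy u ∧ r u z}.ncard) (z : V) :
    {u | Qx u ∧ s u z}.ncard = {u | Qy u ∧ s u z}.ncard := by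
  classical
  let st : Setoid V := ⟨r, hr⟩
  rw [ncard_eq_filter, ncard_eq_filter]
  rw [Finset.card_eq_sum_card_fiberwise
      (f := fun u => Quotient.mk st u) (t := Finset.univ) (fun x _ => Finset.mem_univ _),
    Finset.card_eq_sum_card_fiberwise
      (f := fun u => Quotient.mk st u) (t := Finset.univ) (fun x _ => Finset.mem_univ _)]
  refine Finset.sum_congr rfl (fun q _ => ?_)
  obtain ⟨a, rfl⟩ := Quotient.exists_rep q
  by_cases hz : s a z
  · have key : ∀ (Q : V → Prop) (u : V),
        ((Q u ∧ s u z) ∧ Quotient.mk st u = Quotient.mk st a) ↔ (Q u ∧ r u a) := by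
      intro Q u
      constructor
      · rintro ⟨⟨hQ, -⟩, he⟩
        exact ⟨hQ, Quotient.eq.mp he⟩
      · rintro ⟨hQ, hra⟩
        exact ⟨⟨hQ, hs.trans (hrs _ _ hra) hz⟩, Quotient.sound hra⟩
    have hz' := h a
    rw [ncard_eq_filter, ncard_eq_filter] at hz'
    rw [Finset.filter_filter, Finset.filter_filter]
    rw [Finset.filter_congr (fun u _ => key Qx u), Finset.filter_congr (fun u _ => key Qy u)]
    exact hz'
  · rw [Finset.filter_filter, Finset.filter_filter]
    rw [Finset.filter_false_of_mem, Finset.filter_false_of_mem]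
    · intro u _
      rintro ⟨⟨-, hsz⟩, he⟩
      exact hz (hs.trans (hs.symm (hrs _ _ (Quotient.eq.mp he))) hsz)
    · intro u _
      rintro ⟨⟨-, hsz⟩, he⟩
      exact hz (hs.trans (hs.symm (hrs _ _ (Quotient.eq.mp he))) hsz)

variable (G : SimpleGraph V) (χ : V → V → C)

private lemma crStep_le {r : V → V → Prop} {x y : V} (h : crStep G χ r x y) : r x y := h.1

private lemma crStep_equiv {r : V → V → Prop} (hr : Equivalence r) :
    Equivalence (crStep G χ r) := by
  constructor
  · exact fun x => ⟨hr.refl x, fun z c₁ c₂ => ⟨rfl, rfl⟩⟩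
  · rintro x y ⟨hxy, hc⟩
    exact ⟨hr.symm hxy, fun z c₁ c₂ => ⟨(hc z c₁ c₂).1.symm, (hc z c₁ c₂).2.symm⟩⟩
  · rintro x y z ⟨hxy, hc₁⟩ ⟨hyz, hc₂⟩
    exact ⟨hr.trans hxy hyz, fun w c₁ c₂ =>
      ⟨(hc₁ w c₁ c₂).1.trans (hc₂ w c₁ c₂).1, (hc₁ w c₁ c₂).2.trans (hc₂ w c₁ c₂).2⟩⟩

private lemma crStep_mono {r s : V → V → Prop} (hr : Equivalence r) (hs : Equivalence s)
    (hrs : ∀ a b, r a b → s a b) {x y : V} (h : crStep G χ r x y) : crStep G χ s x y := by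
  obtain ⟨hxy, hcnt⟩ := h
  refine ⟨hrs _ _ hxy, fun z c₁ c₂ => ?_⟩
  have reorder : ∀ (w : V) (R : V → V → Prop) (A : V → Prop),
      {u | u ≠ w ∧ R u z ∧ A u} = {u | (u ≠ w ∧ A u) ∧ R u z} := by
    intro w R A; ext u; constructor
    · rintro ⟨h1, h2, h3⟩; exact ⟨⟨h1, h3⟩, h2⟩
    · rintro ⟨⟨h1, h3⟩, h2⟩; exact ⟨h1, h2, h3⟩
  have reord' : ∀ (w : V) (R : V → V → Prop) (A : V → Prop) (z' : V),
      {u | u ≠ w ∧ R u z' ∧ A u} = {u | (u ≠ w ∧ A u) ∧ R u z'} := by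
    intro w R A z'; ext u; constructor
    · rintro ⟨h1, h2, h3⟩; exact ⟨⟨h1, h3⟩, h2⟩
    · rintro ⟨⟨h1, h3⟩, h2⟩; exact ⟨h1, h2, h3⟩
  constructor
  · have hcongr : ∀ z', {u | (u ≠ x ∧ χ x u = c₁ ∧ χ u x = c₂ ∧ G.Adj x u) ∧ r u z'}.ncard
        = {u | (u ≠ y ∧ χ y u = c₁ ∧ χ u y = c₂ ∧ G.Adj y u) ∧ r u z'}.ncard := by
      intro z'
      rw [← reord' x r _ z', ← reord' y r _ z']
      exact (hcnt z' c₁ c₂).1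
    have := count_mono hr hs hrs _ _ hcongr z
    rwa [← reorder x s _, ← reorder y s _] at this
  · have hcongr : ∀ z', {u | (u ≠ x ∧ χ x u = c₁ ∧ χ u x = c₂ ∧ ¬ G.Adj x u) ∧ r u z'}.ncard
        = {u | (u ≠ y ∧ χ y u = c₁ ∧ χ u y = c₂ ∧ ¬ G.Adj y u) ∧ r u z'}.ncard := by
      intro z'
      rw [← reord' x r _ z', ← reord' y r _ z']
      exact (hcnt z' c₁ c₂).2
    have := count_mono hr hs hrs _ _ hcongr z
    rwa [← reorder x s _, ← reorder y s _] at this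

private lemma splitSmall_le {t : ℕ} {r : V → V → Prop} {x y : V}
    (h : splitSmall t r x y) : r x y := h.1

private lemma splitSmall_equiv {t : ℕ} {r : V → V → Prop} (hr : Equivalence r) :
    Equivalence (splitSmall t r) := by
  constructor
  · exact fun x => ⟨hr.refl x, fun _ => rfl⟩
  · rintro x y ⟨hxy, hsm⟩
    refine ⟨hr.symm hxy, fun hy => ?_⟩
    have hcl : {u | r u y} = {u | r u x} := by
      ext u; exact ⟨fun h => hr.trans h (hr.symm hxy), fun h => hr.trans h hxy⟩
    rw [hcl] at hy
    exact (hsm hy).symm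
  · rintro x y z ⟨hxy, hsm₁⟩ ⟨hyz, hsm₂⟩
    refine ⟨hr.trans hxy hyz, fun hx => ?_⟩
    have hxy' := hsm₁ hx
    subst hxy'
    exact hsm₂ hx

private lemma splitSmall_mono {t : ℕ} {r s : V → V → Prop}
    (hrs : ∀ a b, r a b → s a b) {x y : V} (h : splitSmall t r x y) : splitSmall t s x y := by
  refine ⟨hrs _ _ h.1, fun hy => h.2 (le_trans ?_ hy)⟩
  exact Set.ncard_le_ncard (fun u hu => hrs _ _ hu) (Set.toFinite _)

private lemma crStable_le {r : V → V → Prop} (hr : Equivalence r) {x y : V}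
    (h : crStable G χ r x y) : r x y := by
  unfold crStable at h
  generalize hn : Fintype.card V + 1 = n at h
  clear hn
  induction n generalizing x y with
  | zero => exact h
  | succ n ih =>
      rw [Function.iterate_succ_apply'] at h
      exact ih (crStep_le G χ h)

private lemma crStable_equiv {r : V → V → Prop} (hr : Equivalence r) :
    Equivalence (crStable G χ r) := by
  unfold crStable
  generalize Fintype.card V + 1 = n
  induction n with
  | zero => exact hr
  | succ n ih =>
      rw [Function.iterate_succ_apply']
      exact crStep_equiv G χ ih

private lemma crStable_mono {r s : V → V → Prop} (hr : Equivalence r) (hs : Equivalence s)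
    (hrs : ∀ a b, r a b → s a b) {x y : V} (h : crStable G χ r x y) : crStable G χ s x y := by
  unfold crStable at h ⊢
  generalize hn : Fintype.card V + 1 = n at h ⊢
  clear hn
  induction n generalizing x y with
  | zero => exact hrs _ _ h
  | succ n ih =>
      rw [Function.iterate_succ_apply'] at h ⊢
      refine crStep_mono G χ ?_ ?_ (fun a b hab => ih hab) h
      · -- Equivalence (crStep^[n] r)
        clear h ih
        induction n with
        | zero => exact hr
        | succ n ih => rw [Function.iterate_succ_apply']; exact crStep_equiv G χ ih
      · clear h ih
        induction n with
        | zero => exact hs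
        | succ n ih => rw [Function.iterate_succ_apply']; exact crStep_equiv G χ ih

variable (t : ℕ)

private def opF : (V → V → Prop) → (V → V → Prop) :=
  fun s => splitSmall t (crStable G χ s)

private lemma opF_le {r : V → V → Prop} (hr : Equivalence r) {x y : V}
    (h : opF G χ t r x y) : r x y :=
  crStable_le G χ hr (splitSmall_le h)

private lemma opF_equiv {r : V → V → Prop} (hr : Equivalence r) :
    Equivalence (opF G χ t r) :=
  splitSmall_equiv (crStable_equiv G χ hr)

private lemma opF_mono {r s : V → V → Prop} (hr : Equivalence r) (hs : Equivalence s)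
    (hrs : ∀ a b, r a b → s a b) {x y : V} (h : opF G χ t r x y) : opF G χ t s x y :=
  splitSmall_mono (fun a b hab => crStable_mono G χ hr hs hrs hab) h

private lemma opF_iter_equiv (n : ℕ) {r : V → V → Prop} (hr : Equivalence r) :
    Equivalence ((opF G χ t)^[n] r) := by
  induction n with
  | zero => exact hr
  | succ n ih => rw [Function.iterate_succ_apply']; exact opF_equiv G χ t ih

private lemma opF_iter_le (n : ℕ) {r : V → V → Prop} (hr : Equivalence r) {x y : V}
    (h : (opF G χ t)^[n] r x y) : r x y := by
  induction n generalizing x y with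
  | zero => exact h
  | succ n ih =>
      rw [Function.iterate_succ_apply'] at h
      exact ih (opF_le G χ t (opF_iter_equiv G χ t n hr) h)

private lemma opF_iter_mono (n : ℕ) {r s : V → V → Prop} (hr : Equivalence r)
    (hs : Equivalence s) (hrs : ∀ a b, r a b → s a b) {x y : V}
    (h : (opF G χ t)^[n] r x y) : (opF G χ t)^[n] s x y := by
  induction n generalizing x y with
  | zero => exact hrs _ _ h
  | succ n ih =>
      rw [Function.iterate_succ_apply'] at h ⊢
      exact opF_mono G χ t (opF_iter_equiv G χ t n hr) (opF_iter_equiv G χ t n hs)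
        (fun a b hab => ih hab) h

/-- Number of classes of a relation. -/
private noncomputable def numCl (r : V → V → Prop) : ℕ := Nat.card (Quot r)

private lemma numCl_le (r : V → V → Prop) : numCl r ≤ Fintype.card V := by
  have hsurj : Function.Surjective (Quot.mk r) := Quot.exists_rep
  calc Nat.card (Quot r) ≤ Nat.card V := Nat.card_le_card_of_surjective _ hsurj
    _ = Fintype.card V := Nat.card_eq_fintype_card

private lemma numCl_pos [Nonempty V] (r : V → V → Prop) : 0 < numCl r := by
  have : Nonempty (Quot r) := ⟨Quot.mk r (Classical.arbitrary V)⟩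
  have : Finite (Quot r) := Finite.of_surjective (Quot.mk r) Quot.exists_rep
  exact Nat.card_pos

private lemma numCl_lt {r s : V → V → Prop} (hr : Equivalence r) (hs : Equivalence s)
    (hle : ∀ a b, s a b → r a b) {x y : V} (hxy : r x y) (hnxy : ¬ s x y) :
    numCl r < numCl s := by
  classical
  have hfr : Finite (Quot r) := Finite.of_surjective (Quot.mk r) Quot.exists_rep
  have hfs : Finite (Quot s) := Finite.of_surjective (Quot.mk s) Quot.exists_rep
  haveI := Fintype.ofFinite (Quot r)
  haveI := Fintype.ofFinite (Quot s)
  let f : Quot s → Quot r := Quot.map id (fun a b h => hle a b h)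
  have hsurj : Function.Surjective f := by
    intro q
    obtain ⟨a, rfl⟩ := Quot.exists_rep q
    exact ⟨Quot.mk s a, rfl⟩
  have hninj : ¬ Function.Injective f := by
    intro hinj
    have h1 : f (Quot.mk s x) = f (Quot.mk s y) := Quot.sound hxy
    have h2 := hinj h1
    have h3 : Relation.EqvGen s x y := Quot.eq.mp h2
    exact hnxy ((Equivalence.eqvGen_iff hs).mp h3)
  have := Fintype.card_lt_of_surjective_not_injective f hsurj hninj
  unfold numCl
  rwa [Nat.card_eq_fintype_card, Nat.card_eq_fintype_card]

private lemma opF_fixed {r₀ : V → V → Prop} (h0 : Equivalence r₀) :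
    opF G χ t (tCRStable G χ t r₀) = tCRStable G χ t r₀ := by
  classical
  rcases isEmpty_or_nonempty V with hV | hV
  · funext x; exact isEmptyElim x
  have key : ∃ k ≤ Fintype.card V, opF G χ t ((opF G χ t)^[k] r₀) = (opF G χ t)^[k] r₀ := by
    by_contra hcon
    push_neg at hcon
    have claim : ∀ m ≤ Fintype.card V + 1, m + numCl r₀ ≤ numCl ((opF G χ t)^[m] r₀) := by
      intro m hm
      induction m with
      | zero => simp
      | succ m ih =>
          have hm' : m ≤ Fintype.card V := Nat.lt_succ_iff.mp hm
          have ihm := ih (le_trans (Nat.le_succ m) hm)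
          have heqm : Equivalence ((opF G χ t)^[m] r₀) := opF_iter_equiv G χ t m h0
          have hne := hcon m hm'
          have hlt : numCl ((opF G χ t)^[m] r₀) < numCl ((opF G χ t)^[m+1] r₀) := by
            rw [Function.iterate_succ_apply']
            have hle' : ∀ a b, opF G χ t ((opF G χ t)^[m] r₀) a b → (opF G χ t)^[m] r₀ a b :=
              fun a b hab => opF_le G χ t heqm hab
            obtain ⟨x, hx⟩ := Function.ne_iff.mp (by
              intro heq
              exact hne heq)
            obtain ⟨y, hy⟩ := Function.ne_iff.mp hx
            have hcase : (opF G χ t)^[m] r₀ x y ∧ ¬ opF G χ t ((opF G χ t)^[m] r₀) x y := by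
              by_cases h1 : opF G χ t ((opF G χ t)^[m] r₀) x y
              · exact absurd (propext ⟨fun _ => hle' _ _ h1, fun _ => h1⟩) hy
              · by_cases h2 : (opF G χ t)^[m] r₀ x y
                · exact ⟨h2, h1⟩
                · exact absurd (propext ⟨fun h => absurd h h1, fun h => absurd h h2⟩) hy
            exact numCl_lt heqm (opF_equiv G χ t heqm) hle' hcase.1 hcase.2
          omega
    have := claim (Fintype.card V + 1) le_rfl
    have h1 := numCl_le ((opF G χ t)^[Fintype.card V + 1] r₀)
    have h2 := numCl_pos (V := V) r₀
    omega
  obtain ⟨k, hk, hfix⟩ := key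
  have hstep : ∀ j, (opF G χ t)^[k + j] r₀ = (opF G χ t)^[k] r₀ := by
    intro j
    induction j with
    | zero => rfl
    | succ j ih =>
        rw [← Nat.add_assoc, Function.iterate_succ_apply', ih, hfix]
  have heq1 : tCRStable G χ t r₀ = (opF G χ t)^[k] r₀ := by
    have : Fintype.card V + 1 = k + (Fintype.card V + 1 - k) := by omega
    show (opF G χ t)^[Fintype.card V + 1] r₀ = _
    rw [this, hstep]
  rw [heq1, hfix]

private lemma tCRStable_eq_opF_iter (r : V → V → Prop) :
    tCRStable G χ t r = (opF G χ t)^[Fintype.card V + 1] r := rfl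

private lemma indivRel_equiv (χ : V → V → C) (X : Set V) : Equivalence (indivRel χ X) := by
  constructor
  · exact fun x => ⟨rfl, Iff.rfl, fun _ => rfl⟩
  · rintro x y ⟨h1, h2, h3⟩
    refine ⟨h1.symm, h2.symm, fun hy => ?_⟩
    exact (h3 (h2.mpr hy)).symm
  · rintro x y z ⟨h1, h2, h3⟩ ⟨h1', h2', h3'⟩
    refine ⟨h1.trans h1', h2.trans h2', fun hx => ?_⟩
    rw [h3 hx]
    exact h3' (h2.mp hx)

private lemma mem_clSet_iff {G : SimpleGraph V} {χ : V → V → C} {t : ℕ} {X : Set V} {v : V} :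
    v ∈ clSet G χ t X ↔ ∀ u, tCRStable G χ t (indivRel χ X) u v → u = v := by
  have heq : Equivalence (tCRStable G χ t (indivRel χ X)) :=
    opF_iter_equiv G χ t _ (indivRel_equiv χ X)
  constructor
  · intro h u hu
    rw [clSet, Set.mem_setOf_eq, Set.ncard_eq_one] at h
    obtain ⟨a, ha⟩ := h
    have hv : v ∈ {u | tCRStable G χ t (indivRel χ X) u v} := heq.refl v
    have hu' : u ∈ {u | tCRStable G χ t (indivRel χ X) u v} := hu
    rw [ha] at hv hu'
    rw [Set.mem_singleton_iff] at hv hu'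
    rw [hu', hv]
  · intro h
    rw [clSet, Set.mem_setOf_eq]
    have : {u | tCRStable G χ t (indivRel χ X) u v} = {v} := by
      ext u
      simp only [Set.mem_setOf_eq, Set.mem_singleton_iff]
      exact ⟨h u, fun huv => huv ▸ heq.refl v⟩
    rw [this, Set.ncard_singleton]

private lemma clSet_mono (G : SimpleGraph V) (χ : V → V → C) (t : ℕ) (u v : V)
    (hv : v ∈ clSet G χ t {u}) : clSet G χ t {v} ⊆ clSet G χ t {u} := by
  set ru := tCRStable G χ t (indivRel χ {u}) with hru
  have hequ : Equivalence ru := opF_iter_equiv G χ t _ (indivRel_equiv χ {u})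
  -- ru refines indivRel χ {v}
  have hvs : ∀ a, ru a v → a = v := fun a ha => mem_clSet_iff.mp hv a ha
  have hrefine : ∀ a b, ru a b → indivRel χ {v} a b := by
    intro a b hab
    have hind : indivRel χ {u} a b := opF_iter_le G χ t _ (indivRel_equiv χ {u}) hab
    refine ⟨hind.1, ?_, ?_⟩
    · simp only [Set.mem_singleton_iff]
      constructor
      · rintro rfl; exact (hvs b (hequ.symm hab)).symm ▸ rfl
      · rintro rfl; exact hvs a hab
    · simp only [Set.mem_singleton_iff]
      rintro rfl
      exact (hvs b (hequ.symm hab)).symm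
  -- hence ru = tCRStable ru ≤ tCRStable (indivRel χ {v}) = rv
  have hfix : tCRStable G χ t ru = ru := by
    show (opF G χ t)^[Fintype.card V + 1] ru = ru
    have h1 : opF G χ t ru = ru := opF_fixed G χ t (indivRel_equiv χ {u})
    exact Function.iterate_fixed h1 _
  have hle : ∀ a b, ru a b → tCRStable G χ t (indivRel χ {v}) a b := by
    intro a b hab
    have : tCRStable G χ t ru a b := by rw [hfix]; exact hab
    exact opF_iter_mono G χ t _ hequ (indivRel_equiv χ {v}) hrefine this
  intro w hw
  rw [mem_clSet_iff] at hw ⊢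
  intro a ha
  exact hw a (hle a w ha)

end AuxStmt2

/-- Let `G` be a finite simple graph with a pair-coloring `χ` and `t ∈ ℕ`.
For all `u,v`: if `v ∈ cl_t^{(G,χ)}(u)`, then `cl_t^{(G,χ)}(v) ⊆ cl_t^{(G,χ)}(u)`.
In particular, if `(u,v)` and `(v,w)` are arcs of the `t`-closure graph and `u ≠ w`,
then `(u,w)` is an arc of the `t`-closure graph. -/
theorem stmt_2 {V C : Type*} [Fintype V] (G : SimpleGraph V) (χ : V → V → C) (t : ℕ) :
    (∀ u v : V, v ∈ clSet G χ t {u} → clSet G χ t {v} ⊆ clSet G χ t {u}) ∧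
    (∀ u v w : V, clArc G χ t u v → clArc G χ t v w → u ≠ w → clArc G χ t u w) := by
  constructor
  · exact fun u v hv => clSet_mono G χ t u v hv
  · rintro u v w ⟨huv, hv⟩ ⟨hvw, hw⟩ huw
    exact ⟨huw, clSet_mono G χ t u v hv hw⟩
end

section
/- Let G be a finite simple graph with a pair-coloring χ and let t ∈ ℕ. If v and w are maximal vertices of the t-closure graph of (G,χ), then either cl_t^{(G,χ)}(v) = cl_t^{(G,χ)}(w) or cl_t^{(G,χ)}(v) ∩ cl_t^{(G,χ)}(w) = ∅. -/
open SimpleGraph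

namespace Stmt3Aux

variable {V C : Type*}

/-- `r` refines `s`. -/
def Refines (r s : V → V → Prop) : Prop := ∀ x y, r x y → s x y

lemma indivRel_equiv (χ : V → V → C) (X : Set V) : Equivalence (indivRel χ X) := by
  constructor
  · intro x; exact ⟨rfl, Iff.rfl, fun _ => rfl⟩
  · rintro x y ⟨h1, h2, h3⟩
    exact ⟨h1.symm, h2.symm, fun hy => ((h3 (h2.mpr hy)).symm : y = x)⟩
  · rintro x y z ⟨h1, h2, h3⟩ ⟨h1', h2', h3'⟩
    exact ⟨h1.trans h1', h2.trans h2', fun hx => (h3 hx).trans (h3' (h2.mp hx))⟩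

lemma crStep_refines (G : SimpleGraph V) (χ : V → V → C) (r : V → V → Prop) :
    Refines (crStep G χ r) r := fun _ _ h => h.1

lemma crStep_equiv (G : SimpleGraph V) (χ : V → V → C) {r : V → V → Prop}
    (hr : Equivalence r) : Equivalence (crStep G χ r) := by
  constructor
  · intro x; exact ⟨hr.refl x, fun z c₁ c₂ => ⟨rfl, rfl⟩⟩
  · rintro x y ⟨h1, h2⟩
    exact ⟨hr.symm h1, fun z c₁ c₂ => ⟨(h2 z c₁ c₂).1.symm, (h2 z c₁ c₂).2.symm⟩⟩
  · rintro x y z ⟨h1, h2⟩ ⟨h1', h2'⟩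
    exact ⟨hr.trans h1 h1', fun w c₁ c₂ =>
      ⟨(h2 w c₁ c₂).1.trans (h2' w c₁ c₂).1, (h2 w c₁ c₂).2.trans (h2' w c₁ c₂).2⟩⟩

lemma class_eq {r : V → V → Prop} (hr : Equivalence r) {x y : V} (h : r x y) :
    {u | r u x} = {u | r u y} := by
  ext u; exact ⟨fun hu => hr.trans hu h, fun hu => hr.trans hu (hr.symm h)⟩

lemma splitSmall_refines (t : ℕ) (r : V → V → Prop) : Refines (splitSmall t r) r :=
  fun _ _ h => h.1

lemma splitSmall_equiv (t : ℕ) {r : V → V → Prop} (hr : Equivalence r) :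
    Equivalence (splitSmall t r) := by
  constructor
  · intro x; exact ⟨hr.refl x, fun _ => rfl⟩
  · rintro x y ⟨h1, h2⟩
    refine ⟨hr.symm h1, fun hy => ?_⟩
    rw [class_eq hr (hr.symm h1)] at hy
    exact (h2 hy).symm
  · rintro x y z ⟨h1, h2⟩ ⟨h1', h2'⟩
    refine ⟨hr.trans h1 h1', fun hx => ?_⟩
    exact (h2 hx).trans (h2' (by rwa [← class_eq hr h1]))

lemma ncard_eq_filter_card [Fintype V] (A : V → Prop) [DecidablePred A] :
    {u | A u}.ncard = (Finset.univ.filter A).card := by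
  rw [Set.ncard_eq_toFinset_card', Set.toFinset_setOf]

/-- Key counting lemma: if counts into every `r`-class agree, they agree for
every coarsening `s` of `r`. -/
lemma count_refine [Fintype V] {r s : V → V → Prop} (hr : Equivalence r)
    (hs : Equivalence s) (hrs : Refines r s) {P Q : V → Prop}
    (h : ∀ z, {u | r u z ∧ P u}.ncard = {u | r u z ∧ Q u}.ncard) (z : V) :
    {u | s u z ∧ P u}.ncard = {u | s u z ∧ Q u}.ncard := by
  classical
  letI st : Setoid V := ⟨r, hr⟩
  have key : ∀ R : V → Prop, {u | s u z ∧ R u}.ncard =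
      ∑ k : Quotient st, (Finset.univ.filter
        (fun u => (s u z ∧ R u) ∧ Quotient.mk st u = k)).card := by
    intro R
    rw [ncard_eq_filter_card (fun u => s u z ∧ R u)]
    rw [Finset.card_eq_sum_card_fiberwise (f := fun u => Quotient.mk st u)
      (t := Finset.univ) (fun x _ => Finset.mem_univ _)]
    apply Finset.sum_congr rfl
    intro k _
    congr 1
    ext u
    simp only [Finset.mem_filter, Finset.mem_univ, true_and]
  rw [key P, key Q]
  apply Finset.sum_congr rfl
  intro k _
  have hout : ∀ u : V, Quotient.mk st u = k ↔ r u k.out := by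
    intro u; exact Quotient.mk_eq_iff_out
  by_cases hz : s k.out z
  · have e : ∀ R : V → Prop, (Finset.univ.filter
        (fun u => (s u z ∧ R u) ∧ Quotient.mk st u = k)) =
        Finset.univ.filter (fun u => r u k.out ∧ R u) := by
      intro R
      ext u
      simp only [Finset.mem_filter, Finset.mem_univ, true_and, hout u]
      constructor
      · rintro ⟨⟨_, hR⟩, hk⟩; exact ⟨hk, hR⟩
      · rintro ⟨hk, hR⟩; exact ⟨⟨hs.trans (hrs _ _ hk) hz, hR⟩, hk⟩
    rw [e P, e Q, ← ncard_eq_filter_card, ← ncard_eq_filter_card]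
    exact h k.out
  · have e : ∀ R : V → Prop, (Finset.univ.filter
        (fun u => (s u z ∧ R u) ∧ Quotient.mk st u = k)) = ∅ := by
      intro R
      rw [Finset.filter_eq_empty_iff]
      rintro u _ ⟨⟨hsu, _⟩, hk⟩
      exact hz (hs.trans (hs.symm (hrs _ _ ((hout u).mp hk))) hsu)
    rw [e P, e Q]

lemma set_reorder (r : V → V → Prop) (z : V) (P₁ P₂ : V → Prop) :
    {u | P₁ u ∧ r u z ∧ P₂ u} = {u | r u z ∧ P₁ u ∧ P₂ u} := by
  ext u; simp only [Set.mem_setOf_eq]; tauto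

lemma crStep_mono [Fintype V] (G : SimpleGraph V) (χ : V → V → C) {r s : V → V → Prop}
    (hr : Equivalence r) (hs : Equivalence s) (hrs : Refines r s) :
    Refines (crStep G χ r) (crStep G χ s) := by
  rintro x y ⟨h1, h2⟩
  refine ⟨hrs _ _ h1, fun z c₁ c₂ => ?_⟩
  constructor
  · rw [set_reorder s z, set_reorder s z]
    refine count_refine hr hs hrs (fun z' => ?_) z
    rw [← set_reorder r z', ← set_reorder r z']
    exact (h2 z' c₁ c₂).1
  · rw [set_reorder s z, set_reorder s z]
    refine count_refine hr hs hrs (fun z' => ?_) z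
    rw [← set_reorder r z', ← set_reorder r z']
    exact (h2 z' c₁ c₂).2

lemma splitSmall_mono [Fintype V] (t : ℕ) {r s : V → V → Prop}
    (hrs : Refines r s) : Refines (splitSmall t r) (splitSmall t s) := by
  rintro x y ⟨h1, h2⟩
  refine ⟨hrs _ _ h1, fun hx => ?_⟩
  refine h2 (le_trans (Set.ncard_le_ncard (fun u hu => hrs _ _ hu) (Set.toFinite _)) hx)

section Iter

variable (f : (V → V → Prop) → (V → V → Prop))

lemma iter_equiv (hf : ∀ ⦃s⦄, Equivalence s → Equivalence (f s)) {r : V → V → Prop}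
    (hr : Equivalence r) (k : ℕ) : Equivalence (f^[k] r) := by
  induction k with
  | zero => exact hr
  | succ n ih => rw [Function.iterate_succ_apply']; exact hf ih

lemma iter_refines (hf : ∀ s, Refines (f s) s) {r : V → V → Prop} (k : ℕ) :
    Refines (f^[k] r) r := by
  induction k with
  | zero => exact fun _ _ h => h
  | succ n ih =>
    rw [Function.iterate_succ_apply']
    exact fun x y h => ih x y (hf _ x y h)

lemma iter_mono (hfe : ∀ ⦃s⦄, Equivalence s → Equivalence (f s))
    (hf : ∀ ⦃r s : V → V → Prop⦄, Equivalence r → Equivalence s → Refines r s →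
      Refines (f r) (f s))
    {r s : V → V → Prop} (hr : Equivalence r) (hs : Equivalence s)
    (hrs : Refines r s) (k : ℕ) : Refines (f^[k] r) (f^[k] s) := by
  induction k with
  | zero => exact hrs
  | succ n ih =>
    rw [Function.iterate_succ_apply', Function.iterate_succ_apply']
    exact hf (iter_equiv f hfe hr n) (iter_equiv f hfe hs n) ih

end Iter

end Stmt3Aux

namespace Stmt3Aux

variable {V C : Type*}

/-- The number of classes of a relation, counted as distinct class-sets. -/
noncomputable def nClasses (r : V → V → Prop) : ℕ :=
  Nat.card (Set.range (fun v => {u | r u v}))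

lemma nClasses_le [Fintype V] (r : V → V → Prop) : nClasses r ≤ Fintype.card V := by
  rw [nClasses, ← Nat.card_eq_fintype_card]
  exact Finite.card_range_le _

lemma nClasses_lt [Fintype V] {r s : V → V → Prop} (hr : Equivalence r)
    (hs : Equivalence s) (hrs : Refines r s) (hne : r ≠ s) :
    nClasses s < nClasses r := by
  classical
  have hpair : ∃ x y, s x y ∧ ¬ r x y := by
    by_contra hc
    push_neg at hc
    apply hne
    funext x y
    exact propext ⟨fun h => hrs _ _ h, fun h => hc x y h⟩
  obtain ⟨x, y, hsxy, hrxy⟩ := hpair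
  haveI : Fintype ↥(Set.range (fun v => {u | r u v})) := Fintype.ofFinite _
  haveI : Fintype ↥(Set.range (fun v => {u | s u v})) := Fintype.ofFinite _
  rw [nClasses, nClasses, Nat.card_eq_fintype_card, Nat.card_eq_fintype_card]
  set g : ↥(Set.range (fun v => {u | r u v})) → ↥(Set.range (fun v => {u | s u v})) :=
    fun A => ⟨{u | s u A.2.choose}, Set.mem_range_self _⟩ with hg
  have hgv : ∀ v : V, g ⟨{u | r u v}, Set.mem_range_self v⟩ =
      ⟨{u | s u v}, Set.mem_range_self v⟩ := by
    intro v
    apply Subtype.ext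
    show {u | s u (Exists.choose (Set.mem_range_self (f := fun w => {u | r u w}) v))}
      = {u | s u v}
    have hch : {u | r u (Exists.choose
        (Set.mem_range_self (f := fun w => {u | r u w}) v))} = {u | r u v} :=
      Exists.choose_spec (Set.mem_range_self (f := fun w => {u | r u w}) v)
    have h1 : v ∈ {u | r u (Exists.choose
        (Set.mem_range_self (f := fun w => {u | r u w}) v))} := by
      rw [hch]; exact hr.refl v
    exact class_eq hs (hrs _ _ (hr.symm h1))
  apply Fintype.card_lt_of_surjective_not_injective g
  · rintro ⟨B, v, rfl⟩
    exact ⟨⟨{u | r u v}, Set.mem_range_self v⟩, hgv v⟩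
  · intro hinj
    have h1 : g ⟨{u | r u x}, Set.mem_range_self x⟩ = g ⟨{u | r u y}, Set.mem_range_self y⟩ := by
      rw [hgv x, hgv y]
      exact Subtype.ext (class_eq hs hsxy)
    have h2 := hinj h1
    have h3 : {u | r u x} = {u | r u y} := congrArg Subtype.val h2
    apply hrxy
    have hy : y ∈ {u | r u y} := hr.refl y
    rw [← h3] at hy
    exact hr.symm hy

lemma iterate_fixed [Fintype V] (f : (V → V → Prop) → (V → V → Prop))
    (href : ∀ s, Refines (f s) s)
    (heqv : ∀ ⦃s⦄, Equivalence s → Equivalence (f s))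
    {r : V → V → Prop} (hr : Equivalence r) :
    f (f^[Fintype.card V + 1] r) = f^[Fintype.card V + 1] r := by
  set n := Fintype.card V with hn
  by_contra hcon
  have hnoeq : ∀ k ≤ n, f (f^[k] r) ≠ f^[k] r := by
    intro k hk heq
    apply hcon
    have hstab : ∀ m, f^[k + m] r = f^[k] r := by
      intro m
      induction m with
      | zero => rfl
      | succ p ih =>
        rw [← Nat.add_assoc, Function.iterate_succ_apply', ih, heq]
    have h1 : f^[n+1] r = f^[k] r := by
      have := hstab (n + 1 - k)
      rwa [Nat.add_sub_cancel' (by omega)] at this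
    rw [h1, heq, ← h1]
  have hchain : ∀ k, k ≤ n + 1 → nClasses r + k ≤ nClasses (f^[k] r) := by
    intro k hk
    induction k with
    | zero => simp
    | succ p ih =>
      have hp : p ≤ n := by omega
      have h1 := ih (by omega)
      have h2 : nClasses (f^[p] r) < nClasses (f^[p+1] r) := by
        rw [Function.iterate_succ_apply']
        exact nClasses_lt (heqv (iter_equiv f heqv hr p)) (iter_equiv f heqv hr p)
          (href _) (hnoeq p hp)
      omega
  have h1 := hchain (n+1) le_rfl
  have h2 := nClasses_le (f^[n+1] r)
  rw [← hn] at h2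
  rcases isEmpty_or_nonempty V with hV | hV
  · exact hcon (funext fun a => hV.elim a)
  · have h3 : 0 < nClasses r := Nat.card_pos
    omega

end Stmt3Aux

namespace Stmt3Aux

variable {V C : Type*} [Fintype V] (G : SimpleGraph V) (χ : V → V → C) (t : ℕ)

lemma crStable_equiv {s : V → V → Prop} (hs : Equivalence s) :
    Equivalence (crStable G χ s) :=
  iter_equiv (crStep G χ) (fun _ h => crStep_equiv G χ h) hs _

lemma crStable_refines (s : V → V → Prop) : Refines (crStable G χ s) s :=
  iter_refines (crStep G χ) (crStep_refines G χ) _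

lemma crStable_mono {r s : V → V → Prop} (hr : Equivalence r) (hs : Equivalence s)
    (hrs : Refines r s) : Refines (crStable G χ r) (crStable G χ s) :=
  iter_mono (crStep G χ) (fun _ h => crStep_equiv G χ h)
    (fun _ _ h1 h2 h3 => crStep_mono G χ h1 h2 h3) hr hs hrs _

lemma F_equiv {s : V → V → Prop} (hs : Equivalence s) :
    Equivalence (splitSmall t (crStable G χ s)) :=
  splitSmall_equiv t (crStable_equiv G χ hs)

lemma F_refines (s : V → V → Prop) :
    Refines (splitSmall t (crStable G χ s)) s :=
  fun x y h => crStable_refines G χ s x y (splitSmall_refines t _ x y h)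

lemma F_mono {r s : V → V → Prop} (hr : Equivalence r) (hs : Equivalence s)
    (hrs : Refines r s) :
    Refines (splitSmall t (crStable G χ r)) (splitSmall t (crStable G χ s)) :=
  splitSmall_mono t (crStable_mono G χ hr hs hrs)

lemma tCR_equiv {r : V → V → Prop} (hr : Equivalence r) :
    Equivalence (tCRStable G χ t r) :=
  iter_equiv _ (fun _ h => F_equiv G χ t h) hr _

lemma tCR_refines (r : V → V → Prop) : Refines (tCRStable G χ t r) r :=
  iter_refines _ (F_refines G χ t) _

lemma tCR_mono {r s : V → V → Prop} (hr : Equivalence r) (hs : Equivalence s)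
    (hrs : Refines r s) : Refines (tCRStable G χ t r) (tCRStable G χ t s) :=
  iter_mono _ (fun _ h => F_equiv G χ t h)
    (fun _ _ h1 h2 h3 => F_mono G χ t h1 h2 h3) hr hs hrs _

lemma tCR_idem {r : V → V → Prop} (hr : Equivalence r) :
    tCRStable G χ t (tCRStable G χ t r) = tCRStable G χ t r := by
  have hfix := iterate_fixed (fun s => splitSmall t (crStable G χ s))
    (F_refines G χ t) (fun _ h => F_equiv G χ t h) hr
  exact Function.iterate_fixed (f := fun s => splitSmall t (crStable G χ s)) hfix _

/-- The `t`-CR-stable class of `v` after individualizing `v` is `{v}`. -/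
lemma class_self (v : V) : {z | tCRStable G χ t (indivRel χ {v}) z v} = {v} := by
  apply Set.eq_singleton_iff_unique_mem.mpr
  constructor
  · exact (tCR_equiv G χ t (indivRel_equiv χ {v})).refl v
  · intro z hz
    have h := tCR_refines G χ t (indivRel χ {v}) z v hz
    exact h.2.1.mpr rfl

lemma mem_cl_self (v : V) : v ∈ clSet G χ t {v} := by
  show Set.ncard _ = 1
  rw [class_self]
  exact Set.ncard_singleton v

/-- If `u` is a singleton class, the class of `u` is `{u}`. -/
lemma class_of_mem_cl {X : Set V} {u : V}
    (hu : u ∈ clSet G χ t X) : {z | tCRStable G χ t (indivRel χ X) z u} = {u} := by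
  obtain ⟨a, ha⟩ := Set.ncard_eq_one.mp hu
  have hmem : u ∈ {z | tCRStable G χ t (indivRel χ X) z u} :=
    (tCR_equiv G χ t (indivRel_equiv χ X)).refl u
  rw [ha] at hmem ⊢
  rw [Set.mem_singleton_iff.mp hmem]

/-- Core lemma: the closure of a member of a closure is contained in it. -/
lemma cl_subset {v u : V} (hu : u ∈ clSet G χ t {v}) :
    clSet G χ t {u} ⊆ clSet G χ t {v} := by
  set rv := tCRStable G χ t (indivRel χ {v}) with hrv
  have hrve : Equivalence rv := tCR_equiv G χ t (indivRel_equiv χ {v})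
  -- rv refines the individualization of u
  have h1 : Refines rv (indivRel χ {u}) := by
    intro x y hxy
    have hcl := class_of_mem_cl G χ t hu
    have hvv : Refines rv (indivRel χ {v}) := tCR_refines G χ t _
    refine ⟨(hvv x y hxy).1, ?_, ?_⟩
    · constructor
      · intro hx
        have : rv u y := by rw [Set.mem_singleton_iff.mp hx] at hxy; exact hxy
        have : y ∈ {z | rv z u} := hrve.symm this
        rw [hcl] at this
        exact this
      · intro hy
        have : rv x u := by rwa [Set.mem_singleton_iff.mp hy] at hxy
        have : x ∈ {z | rv z u} := this
        rw [hcl] at this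
        exact this
    · intro hx
      have : rv u y := by rw [Set.mem_singleton_iff.mp hx] at hxy; exact hxy
      have h2 : y ∈ {z | rv z u} := hrve.symm this
      rw [hcl] at h2
      rw [Set.mem_singleton_iff.mp hx, Set.mem_singleton_iff.mp h2]
  -- hence rv refines r_u
  have h2 : Refines rv (tCRStable G χ t (indivRel χ {u})) := by
    have := tCR_mono G χ t hrve (indivRel_equiv χ {u}) h1
    rwa [hrv, tCR_idem G χ t (indivRel_equiv χ {v})] at this
  -- conclude
  intro x hx
  obtain ⟨a, ha⟩ := Set.ncard_eq_one.mp hx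
  show Set.ncard _ = 1
  have hsub : {z | rv z x} ⊆ {a} := by
    rw [← ha]; exact fun z hz => h2 z x hz
  have hne : ({z | rv z x}).Nonempty := ⟨x, hrve.refl x⟩
  rw [(hne.subset_singleton_iff).mp hsub]
  exact Set.ncard_singleton a

lemma mem_cl_of_mem_cl {v u : V} (hv : MaximalVtx G χ t v)
    (hu : u ∈ clSet G χ t {v}) : v ∈ clSet G χ t {u} := by
  by_cases h : v = u
  · rw [← h]; exact mem_cl_self G χ t v
  · exact (hv u ⟨h, hu⟩).2

end Stmt3Aux

/-- Let `G` be a finite simple graph with a pair-coloring `χ` and `t ∈ ℕ`.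
If `v` and `w` are maximal vertices of the `t`-closure graph of `(G,χ)`, then either
`cl_t^{(G,χ)}(v) = cl_t^{(G,χ)}(w)` or `cl_t^{(G,χ)}(v) ∩ cl_t^{(G,χ)}(w) = ∅`. -/
theorem stmt_3 {V C : Type*} [Fintype V] (G : SimpleGraph V) (χ : V → V → C) (t : ℕ)
    (v w : V) (hv : MaximalVtx G χ t v) (hw : MaximalVtx G χ t w) :
    clSet G χ t {v} = clSet G χ t {w} ∨ clSet G χ t {v} ∩ clSet G χ t {w} = ∅ := by
  rcases Set.eq_empty_or_nonempty (clSet G χ t {v} ∩ clSet G χ t {w}) with h | ⟨x, hxv, hxw⟩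
  · exact Or.inr h
  · left
    have h1 : clSet G χ t {v} = clSet G χ t {x} :=
      subset_antisymm (Stmt3Aux.cl_subset G χ t (Stmt3Aux.mem_cl_of_mem_cl G χ t hv hxv))
        (Stmt3Aux.cl_subset G χ t hxv)
    have h2 : clSet G χ t {w} = clSet G χ t {x} :=
      subset_antisymm (Stmt3Aux.cl_subset G χ t (Stmt3Aux.mem_cl_of_mem_cl G χ t hw hxw))
        (Stmt3Aux.cl_subset G χ t hxw)
    rw [h1, h2]
end

section
/- Assume the Setup, and set D := ⋃_{v∈X} D(v). Then: (1) D is χ-invariant, i.e., for all u,u' ∈ V(G) with χ(u,u) = χ(u',u'), u ∈ D if and only if u' ∈ D; (2) for all distinct u,w ∈ V(G) and distinct u',w' ∈ V(G) with χ(u,w) = χ(u',w'), if u and w lie in a common set D(v) for some v ∈ X, then u' and w' lie in a common set D(v') for some v' ∈ X; and (3) the multiset {{χ(u,w) : u ∈ D(v), w ∈ D(v)}} is the same for all v ∈ X. -/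
open SimpleGraph

open scoped Classical

section AuxStmt9

private lemma iter_sub {α : Type*} (f : (α → α → Prop) → α → α → Prop)
    (hf : ∀ s x y, f s x y → s x y) :
    ∀ (n : ℕ) (r : α → α → Prop) (x y : α), (f^[n] r) x y → r x y := by
  intro n
  induction n with
  | zero => exact fun r x y h => h
  | succ n ih =>
    intro r x y h
    rw [Function.iterate_succ_apply'] at h
    exact ih r x y (hf _ x y h)

private lemma iter_refl {α : Type*} (f : (α → α → Prop) → α → α → Prop)
    (hf : ∀ s, (∀ x, s x x) → ∀ x, f s x x) :
    ∀ (n : ℕ) (r : α → α → Prop), (∀ x, r x x) → ∀ x, (f^[n] r) x x := by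
  intro n
  induction n with
  | zero => exact fun r hr => hr
  | succ n ih =>
    intro r hr x
    rw [Function.iterate_succ_apply']
    exact hf _ (ih r hr) x

variable {V C : Type*} [Fintype V]

private lemma tCRStable_sub (G : SimpleGraph V) (χ : V → V → C) (t : ℕ)
    (r : V → V → Prop) {x y : V} (h : tCRStable G χ t r x y) : r x y := by
  refine iter_sub _ ?_ _ r x y h
  intro s x y hs
  exact iter_sub (crStep G χ) (fun s x y h => h.1) _ s x y hs.1

private lemma tCRStable_refl (G : SimpleGraph V) (χ : V → V → C) (t : ℕ)
    (r : V → V → Prop) (hr : ∀ x, r x x) (x : V) : tCRStable G χ t r x x := by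
  refine iter_refl _ ?_ _ r hr x
  intro s hs x
  refine ⟨iter_refl (crStep G χ) ?_ _ s hs x, fun _ => rfl⟩
  intro s hs x
  exact ⟨hs x, fun z c₁ c₂ => ⟨rfl, rfl⟩⟩

private lemma mem_clSet_self (G : SimpleGraph V) (χ : V → V → C) (t : ℕ) (v : V) :
    v ∈ clSet G χ t {v} := by
  have hset : {u | tCRStable G χ t (indivRel χ {v}) u v} = {v} := by
    ext u
    simp only [Set.mem_setOf_eq, Set.mem_singleton_iff]
    constructor
    · intro h
      exact (tCRStable_sub G χ t _ h).2.1.mpr rfl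
    · rintro rfl
      exact tCRStable_refl G χ t _ (fun x => ⟨rfl, Iff.rfl, fun _ => rfl⟩) u
  show {u | tCRStable G χ t (indivRel χ {v}) u v}.ncard = 1
  rw [hset, Set.ncard_singleton]

variable {G : SimpleGraph V} {χ : V → V → C} {t : ℕ}

private lemma clSet_transfer (h2H : IsTwoStableDigraph (clArc G χ t) χ)
    {x v x' v' : V} (hc : χ x v = χ x' v') (hx : x ∈ clSet G χ t {v}) :
    x' ∈ clSet G χ t {v'} := by
  obtain ⟨⟨hiff, _, hE, _, _⟩, _⟩ := h2H x v x' v' hc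
  by_cases hxv : x = v
  · rw [hiff.mp hxv]
    exact mem_clSet_self G χ t v'
  · exact (hE.mp ⟨fun h => hxv h.symm, hx⟩).2

private lemma clSet_transfer' (h2H : IsTwoStableDigraph (clArc G χ t) χ)
    {x v x' v' : V} (hc : χ v x = χ v' x') (hx : x ∈ clSet G χ t {v}) :
    x' ∈ clSet G χ t {v'} := by
  obtain ⟨⟨hiff, hE, _, _, _⟩, _⟩ := h2H v x v' x' hc
  by_cases hxv : v = x
  · rw [← hiff.mp hxv]
    exact mem_clSet_self G χ t v'
  · exact (hE.mp ⟨hxv, hx⟩).2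

private lemma exists_transfer (h2H : IsTwoStableDigraph (clArc G χ t) χ)
    {p q p' q' : V} (hc : χ p q = χ p' q') {c₁ c₂ : C}
    (hne : ∃ u, χ p u = c₁ ∧ χ u q = c₂) : ∃ u, χ p' u = c₁ ∧ χ u q' = c₂ := by
  have hcount := (h2H p q p' q' hc).2 c₁ c₂
  have h1 : 0 < {u | χ p u = c₁ ∧ χ u q = c₂}.ncard := by
    rw [Set.ncard_pos (Set.toFinite _)]
    exact hne
  rw [hcount] at h1
  have h2 := (Set.ncard_pos (Set.toFinite _)).mp h1
  exact h2

/-- The color-determined predicate for membership in some `D(z)` with `χ z z = c₀`. -/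
private def QD (G : SimpleGraph V) (χ : V → V → C) (t : ℕ) (c₀ : C) : C → Prop :=
  fun b => ∃ y z, χ y z = b ∧ χ z z = c₀ ∧ y ∈ clSet G χ t {z}

private lemma mem_iff_QD (h2H : IsTwoStableDigraph (clArc G χ t) χ) {c₀ : C}
    {v : V} (hv : χ v v = c₀) (x : V) :
    x ∈ clSet G χ t {v} ↔ QD G χ t c₀ (χ x v) := by
  constructor
  · intro hx; exact ⟨x, v, rfl, hv, hx⟩
  · rintro ⟨y, z, hb, _, hy⟩
    exact clSet_transfer h2H hb hy

private lemma ncard_filter_eq {α : Type*} [Fintype α] (p : α → Prop) [DecidablePred p] :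
    {x | p x}.ncard = (Finset.univ.filter p).card := by
  rw [Set.ncard_eq_toFinset_card', Set.toFinset_setOf]

private lemma stepA (h2H : IsTwoStableDigraph (clArc G χ t) χ)
    {p q p' q' : V} (hc : χ p q = χ p' q') (c₁ c₂ : C) :
    (Finset.univ.filter fun y => χ p y = c₁ ∧ χ y q = c₂).card =
      (Finset.univ.filter fun y => χ p' y = c₁ ∧ χ y q' = c₂).card := by
  have h := (h2H p q p' q' hc).2 c₁ c₂
  rwa [ncard_filter_eq, ncard_filter_eq] at h

private lemma stepC_term (h2H : IsTwoStableDigraph (clArc G χ t) χ)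
    {p q p' q' : V} (hc : χ p q = χ p' q') (R₁ R₂ : C → Prop) (a b : C) :
    (Finset.univ.filter fun y : V =>
        (R₁ (χ p y) ∧ R₂ (χ y q)) ∧ (χ p y, χ y q) = (a, b)).card =
      (Finset.univ.filter fun y : V =>
        (R₁ (χ p' y) ∧ R₂ (χ y q')) ∧ (χ p' y, χ y q') = (a, b)).card := by
  by_cases hR : R₁ a ∧ R₂ b
  · have key : ∀ (r s : V), (Finset.univ.filter fun y : V =>
        (R₁ (χ r y) ∧ R₂ (χ y s)) ∧ (χ r y, χ y s) = (a, b)) =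
        (Finset.univ.filter fun y : V => χ r y = a ∧ χ y s = b) := by
      intro r s
      apply Finset.filter_congr
      intro y _
      simp only [Prod.mk.injEq]
      constructor
      · rintro ⟨-, h1, h2⟩; exact ⟨h1, h2⟩
      · rintro ⟨h1, h2⟩
        exact ⟨⟨by rw [h1]; exact hR.1, by rw [h2]; exact hR.2⟩, h1, h2⟩
    rw [key p q, key p' q']
    exact stepA h2H hc a b
  · have key : ∀ (r s : V), (Finset.univ.filter fun y : V =>
        (R₁ (χ r y) ∧ R₂ (χ y s)) ∧ (χ r y, χ y s) = (a, b)) = ∅ := by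
      intro r s
      rw [Finset.filter_eq_empty_iff]
      rintro y - ⟨⟨h1, h2⟩, heq⟩
      rw [Prod.mk.injEq] at heq
      exact hR ⟨heq.1 ▸ h1, heq.2 ▸ h2⟩
    rw [key p q, key p' q']

private lemma stepD (h2H : IsTwoStableDigraph (clArc G χ t) χ)
    {q q' : V} (hc : χ q q = χ q' q') (b : C) :
    (Finset.univ.filter fun y => χ y q = b).card =
      (Finset.univ.filter fun y => χ y q' = b).card := by
  set B : Finset C := ((Finset.univ.image fun y : V => χ q y) ∪
    (Finset.univ.image fun y : V => χ q' y)) with hB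
  have hmap : ∀ y ∈ Finset.univ.filter fun y => χ y q = b, χ q y ∈ B := fun y _ =>
    Finset.mem_union_left _ (Finset.mem_image_of_mem _ (Finset.mem_univ y))
  have hmap' : ∀ y ∈ Finset.univ.filter fun y => χ y q' = b, χ q' y ∈ B := fun y _ =>
    Finset.mem_union_right _ (Finset.mem_image_of_mem _ (Finset.mem_univ y))
  rw [Finset.card_eq_sum_card_fiberwise hmap, Finset.card_eq_sum_card_fiberwise hmap']
  refine Finset.sum_congr rfl fun a _ => ?_
  rw [Finset.filter_filter, Finset.filter_filter]
  have e1 : (Finset.univ.filter fun y => χ y q = b ∧ χ q y = a) =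
      Finset.univ.filter fun y => χ q y = a ∧ χ y q = b :=
    Finset.filter_congr fun y _ => and_comm
  have e2 : (Finset.univ.filter fun y => χ y q' = b ∧ χ q' y = a) =
      Finset.univ.filter fun y => χ q' y = a ∧ χ y q' = b :=
    Finset.filter_congr fun y _ => and_comm
  rw [e1, e2]
  exact stepA h2H hc a b

private lemma stepC (h2H : IsTwoStableDigraph (clArc G χ t) χ)
    {p q p' q' : V} (hc : χ p q = χ p' q') (R₁ R₂ : C → Prop) :
    (Finset.univ.filter fun y => R₁ (χ p y) ∧ R₂ (χ y q)).card =
      (Finset.univ.filter fun y => R₁ (χ p' y) ∧ R₂ (χ y q')).card := by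
  set B : Finset (C × C) :=
    ((Finset.univ.image fun y : V => (χ p y, χ y q)) ∪
      (Finset.univ.image fun y : V => (χ p' y, χ y q'))) with hB
  have hmap : ∀ y ∈ Finset.univ.filter fun y => R₁ (χ p y) ∧ R₂ (χ y q),
      (χ p y, χ y q) ∈ B := fun y _ =>
    Finset.mem_union_left _ (Finset.mem_image_of_mem _ (Finset.mem_univ y))
  have hmap' : ∀ y ∈ Finset.univ.filter fun y => R₁ (χ p' y) ∧ R₂ (χ y q'),
      (χ p' y, χ y q') ∈ B := fun y _ =>
    Finset.mem_union_right _ (Finset.mem_image_of_mem _ (Finset.mem_univ y))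
  rw [Finset.card_eq_sum_card_fiberwise hmap, Finset.card_eq_sum_card_fiberwise hmap']
  refine Finset.sum_congr rfl fun ab _ => ?_
  rw [Finset.filter_filter, Finset.filter_filter]
  obtain ⟨a, b⟩ := ab
  exact stepC_term h2H hc R₁ R₂ a b

private noncomputable def gFun (G : SimpleGraph V) (χ : V → V → C) (t : ℕ)
    (c₀ c : C) (z x : V) : ℕ :=
  if QD G χ t c₀ (χ x z) then
    (Finset.univ.filter fun y => χ x y = c ∧ QD G χ t c₀ (χ y z)).card
  else 0

private lemma gFun_key (h2H : IsTwoStableDigraph (clArc G χ t) χ) {c₀ : C} (c : C)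
    {x z x' z' : V} (hc : χ x z = χ x' z') :
    gFun G χ t c₀ c z x = gFun G χ t c₀ c z' x' := by
  unfold gFun
  rw [hc]
  by_cases hQ : QD G χ t c₀ (χ x' z')
  · rw [if_pos hQ, if_pos hQ]
    exact stepC h2H hc (fun d => d = c) (QD G χ t c₀)
  · rw [if_neg hQ, if_neg hQ]

private lemma prod_count (G : SimpleGraph V) (χ : V → V → C) (t : ℕ) (c₀ c : C)
    (w : V) :
    (Finset.univ.filter fun pr : V × V =>
        QD G χ t c₀ (χ pr.1 w) ∧ QD G χ t c₀ (χ pr.2 w) ∧ χ pr.1 pr.2 = c).card =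
      ∑ x : V, gFun G χ t c₀ c w x := by
  rw [Finset.card_filter, Fintype.sum_prod_type]
  refine Finset.sum_congr rfl fun x _ => ?_
  unfold gFun
  by_cases hx : QD G χ t c₀ (χ x w)
  · rw [if_pos hx]
    simp only [hx, true_and, Finset.card_filter]
    refine Finset.sum_congr rfl fun y _ => ?_
    exact if_congr and_comm rfl rfl
  · rw [if_neg hx]
    simp only [hx, false_and, if_false, Finset.sum_const_zero]

private lemma count_eq (h2H : IsTwoStableDigraph (clArc G χ t) χ) {c₀ : C}
    {v v' : V} (hv : χ v v = c₀) (hv' : χ v' v' = c₀) (c : C) :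
    (Finset.univ.filter fun pr : V × V =>
        QD G χ t c₀ (χ pr.1 v) ∧ QD G χ t c₀ (χ pr.2 v) ∧ χ pr.1 pr.2 = c).card =
      (Finset.univ.filter fun pr : V × V =>
        QD G χ t c₀ (χ pr.1 v') ∧ QD G χ t c₀ (χ pr.2 v') ∧ χ pr.1 pr.2 = c).card := by
  rw [prod_count, prod_count]
  set B : Finset C := ((Finset.univ.image fun x : V => χ x v) ∪
    (Finset.univ.image fun x : V => χ x v')) with hB
  have hmap : ∀ x ∈ (Finset.univ : Finset V), χ x v ∈ B := fun x _ =>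
    Finset.mem_union_left _ (Finset.mem_image_of_mem _ (Finset.mem_univ x))
  have hmap' : ∀ x ∈ (Finset.univ : Finset V), χ x v' ∈ B := fun x _ =>
    Finset.mem_union_right _ (Finset.mem_image_of_mem _ (Finset.mem_univ x))
  rw [← Finset.sum_fiberwise_of_maps_to hmap (gFun G χ t c₀ c v),
    ← Finset.sum_fiberwise_of_maps_to hmap' (gFun G χ t c₀ c v')]
  refine Finset.sum_congr rfl fun a _ => ?_
  have hcard : (Finset.univ.filter fun x => χ x v = a).card =
      (Finset.univ.filter fun x => χ x v' = a).card := by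
    exact stepD h2H (hv.trans hv'.symm) a
  rcases Finset.eq_empty_or_nonempty (Finset.univ.filter fun x => χ x v = a) with
    he | ⟨x₀, hx₀⟩
  · have he' : (Finset.univ.filter fun x => χ x v' = a) = ∅ := by
      rw [← Finset.card_eq_zero, ← hcard, he, Finset.card_empty]
    rw [he, he', Finset.sum_empty, Finset.sum_empty]
  · have hx₀' : χ x₀ v = a := (Finset.mem_filter.mp hx₀).2
    have hconst : ∀ x ∈ Finset.univ.filter fun x => χ x v = a,
        gFun G χ t c₀ c v x = gFun G χ t c₀ c v x₀ := fun x hx =>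
      gFun_key h2H c ((Finset.mem_filter.mp hx).2.trans hx₀'.symm)
    have hconst' : ∀ x ∈ Finset.univ.filter fun x => χ x v' = a,
        gFun G χ t c₀ c v' x = gFun G χ t c₀ c v x₀ := fun x hx =>
      gFun_key h2H c ((Finset.mem_filter.mp hx).2.trans hx₀'.symm)
    rw [Finset.sum_congr rfl hconst, Finset.sum_congr rfl hconst',
      Finset.sum_const, Finset.sum_const, hcard]

end AuxStmt9

/-- Assume the Setup, and set `D := ⋃_{v∈X} D(v)`. Then: (1) `D` is
`χ`-invariant; (2) for all distinct `u,w` and distinct `u',w'` with `χ(u,w) = χ(u',w')`,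
if `u` and `w` lie in a common set `D(v)` for some `v ∈ X`, then `u'` and `w'` lie in a
common set `D(v')` for some `v' ∈ X`; and (3) the multiset `{{χ(u,w) : u,w ∈ D(v)}}` is
the same for all `v ∈ X`. -/
theorem stmt_9 {V C : Type*} [Fintype V]
    (a : ℝ) (ha : 2 ≤ a) (hdeg : DegSumConst a)
    (h : ℕ) (hh : 1 ≤ h)
    (G : SimpleGraph V) (hconn : G.Connected)
    (t : ℕ) (ht : 144 * a ^ 2 * (h : ℝ) ^ 5 ≤ (t : ℝ))
    (χ : V → V → C) (h2G : IsTwoStable G χ)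
    (h2H : IsTwoStableDigraph (clArc G χ t) χ)
    (c₀ : C) (hc₀ : ∃ v : V, χ v v = c₀ ∧ MaximalVtx G χ t v) :
    (∀ u u' : V, χ u u = χ u' u' →
      ((u ∈ ⋃ v ∈ {x : V | χ x x = c₀}, clSet G χ t {v}) ↔
        (u' ∈ ⋃ v ∈ {x : V | χ x x = c₀}, clSet G χ t {v}))) ∧
    (∀ u w u' w' : V, u ≠ w → u' ≠ w' → χ u w = χ u' w' →
      (∃ v ∈ {x : V | χ x x = c₀}, u ∈ clSet G χ t {v} ∧ w ∈ clSet G χ t {v}) →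
      (∃ v' ∈ {x : V | χ x x = c₀}, u' ∈ clSet G χ t {v'} ∧ w' ∈ clSet G χ t {v'})) ∧
    (∀ v ∈ {x : V | χ x x = c₀}, ∀ v' ∈ {x : V | χ x x = c₀}, ∀ c : C,
      {p : V × V | p.1 ∈ clSet G χ t {v} ∧ p.2 ∈ clSet G χ t {v} ∧ χ p.1 p.2 = c}.ncard =
        {p : V × V | p.1 ∈ clSet G χ t {v'} ∧ p.2 ∈ clSet G χ t {v'} ∧ χ p.1 p.2 = c}.ncard) := by
  have memD : ∀ u : V, (u ∈ ⋃ v ∈ {x : V | χ x x = c₀}, clSet G χ t {v}) ↔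
      ∃ v, χ v v = c₀ ∧ u ∈ clSet G χ t {v} := by
    intro u
    simp only [Set.mem_iUnion, Set.mem_setOf_eq, exists_prop]
  have dir : ∀ u u' : V, χ u u = χ u' u' →
      (∃ v, χ v v = c₀ ∧ u ∈ clSet G χ t {v}) →
      ∃ v', χ v' v' = c₀ ∧ u' ∈ clSet G χ t {v'} := by
    rintro u u' hc ⟨v, hv, hu⟩
    by_cases hvu : v = u
    · subst hvu
      refine ⟨u', ?_, mem_clSet_self G χ t u'⟩
      rw [← hc]; exact hv
    · obtain ⟨z, hz1, hz2⟩ :=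
        exists_transfer h2H hc (c₁ := χ u v) (c₂ := χ v u) ⟨v, rfl, rfl⟩
      refine ⟨z, ?_, clSet_transfer' h2H hz2.symm hu⟩
      have hzz := ((h2H z u' v u hz2).1).2.2.2.1
      rw [hzz]; exact hv
  refine ⟨fun u u' hc => ⟨fun hu => (memD u').mpr (dir u u' hc ((memD u).mp hu)),
      fun hu' => (memD u).mpr (dir u' u hc.symm ((memD u').mp hu'))⟩, ?_, ?_⟩
  · rintro u w u' w' huw hu'w' hc ⟨v, hv, hu, hw⟩
    have hv' : χ v v = c₀ := hv
    obtain ⟨z, hz1, hz2⟩ :=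
      exists_transfer h2H hc (c₁ := χ u v) (c₂ := χ v w) ⟨v, rfl, rfl⟩
    have hzz : χ z z = χ v v := ((h2H u' z u v hz1).1).2.2.2.2
    refine ⟨z, ?_, clSet_transfer h2H hz1.symm hu, clSet_transfer' h2H hz2.symm hw⟩
    show χ z z = c₀
    rw [hzz]; exact hv'
  · intro v hv v' hv' c
    have hvc : χ v v = c₀ := hv
    have hvc' : χ v' v' = c₀ := hv'
    rw [ncard_filter_eq, ncard_filter_eq]
    have e1 : (Finset.univ.filter fun p : V × V =>
        p.1 ∈ clSet G χ t {v} ∧ p.2 ∈ clSet G χ t {v} ∧ χ p.1 p.2 = c) =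
        Finset.univ.filter fun p : V × V =>
          QD G χ t c₀ (χ p.1 v) ∧ QD G χ t c₀ (χ p.2 v) ∧ χ p.1 p.2 = c := by
      apply Finset.filter_congr
      intro p _
      rw [mem_iff_QD h2H hvc p.1, mem_iff_QD h2H hvc p.2]
    have e2 : (Finset.univ.filter fun p : V × V =>
        p.1 ∈ clSet G χ t {v'} ∧ p.2 ∈ clSet G χ t {v'} ∧ χ p.1 p.2 = c) =
        Finset.univ.filter fun p : V × V =>
          QD G χ t c₀ (χ p.1 v') ∧ QD G χ t c₀ (χ p.2 v') ∧ χ p.1 p.2 = c := by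
      apply Finset.filter_congr
      intro p _
      rw [mem_iff_QD h2H hvc' p.1, mem_iff_QD h2H hvc' p.2]
    rw [e1, e2]
    exact count_eq h2H hvc hvc' c
end
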